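/- arXiv:1101.5711 — 2 statements merged into one kernel-verified Lean document; each statement's English description precedes it below -/
import Mathlib

section
/- For the complete graph $K_n$ and any rule $\mathcal{R}$, the expected edge cover time of greedy random walk satisfies ${\mathbb E}[C_E(K_n)] \leq \binom{n}{2} + \sum_{i=1}^{n-1} \frac{n-1}{n-i}$. -/
open MeasureTheory ProbabilityTheory ENNReal

namespace GRW

variable {V : Type*}

/-- The set of edges traversed by a trajectory `x` during the time interval `[0, t]`. -/
def traversed (x : ℕ → V) (t : ℕ) : Set (Sym2 V) :=
  {e | ∃ s : ℕ, 0 < s ∧ s ≤ t ∧ e = s(x (s - 1), x s)}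

/-- The neighbours of `v` reachable along an edge not yet traversed by the
trajectory `x` up to time `t` (i.e. the endpoints of the edges in `J_t(v)`). -/
def freshNbrs (G : SimpleGraph V) (x : ℕ → V) (t : ℕ) (v : V) : Set V :=
  {w | G.Adj v w ∧ s(v, w) ∉ traversed x t}

/-- The event that the process `X` follows the trajectory `x` up to time `t`. -/
def prefixEvent {Ω : Type*} (X : ℕ → Ω → V) (t : ℕ) (x : ℕ → V) : Set Ω :=
  {ω | ∀ i ≤ t, X i ω = x i}

/-- `X` is a greedy random walk on `G` (with an arbitrary rule `𝓡`): conditioned on any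
trajectory prefix of positive probability, the next step goes along an untraversed
incident edge whenever one exists, and otherwise to a uniformly random neighbour. -/
def IsGRW {Ω : Type*} [MeasurableSpace Ω] (G : SimpleGraph V) [G.LocallyFinite]
    (μ : Measure Ω) (X : ℕ → Ω → V) : Prop :=
  (∀ t, @Measurable Ω V _ ⊤ (X t)) ∧
  ∀ (t : ℕ) (x : ℕ → V), μ (prefixEvent X t x) ≠ 0 →
    ((freshNbrs G x t (x t)).Nonempty →
      (μ[|prefixEvent X t x]) {ω | X (t + 1) ω ∈ freshNbrs G x t (x t)} = 1) ∧
    (freshNbrs G x t (x t) = ∅ →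
      ∀ w : V, G.Adj (x t) w →
        (μ[|prefixEvent X t x]) {ω | X (t + 1) ω = w} = ((G.degree (x t) : ℝ≥0∞))⁻¹) ∧
    (μ[|prefixEvent X t x]) {ω | G.Adj (x t) (X (t + 1) ω)} = 1

/-- `Y` is a simple random walk on `G`: conditioned on any trajectory prefix of positive
probability, the next step goes to a uniformly random neighbour. -/
def IsSRW {Ω : Type*} [MeasurableSpace Ω] (G : SimpleGraph V) [G.LocallyFinite]
    (μ : Measure Ω) (Y : ℕ → Ω → V) : Prop :=
  (∀ t, @Measurable Ω V _ ⊤ (Y t)) ∧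
  ∀ (t : ℕ) (x : ℕ → V), μ (prefixEvent Y t x) ≠ 0 →
    (∀ w : V, G.Adj (x t) w →
      (μ[|prefixEvent Y t x]) {ω | Y (t + 1) ω = w} = ((G.degree (x t) : ℝ≥0∞))⁻¹) ∧
    (μ[|prefixEvent Y t x]) {ω | G.Adj (x t) (Y (t + 1) ω)} = 1

/-- The edge cover time of the process `X` on the graph `G`, as an extended natural
number (`⊤` if the edges are never all traversed). -/
noncomputable def edgeCoverTime (G : SimpleGraph V) {Ω : Type*} (X : ℕ → Ω → V)
    (ω : Ω) : ℕ∞ :=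
  sInf ((↑) '' {t : ℕ | G.edgeSet ⊆ traversed (fun s => X s ω) t})

/-- The vertex cover time of the process `Y`, as an extended natural number. -/
noncomputable def vertexCoverTime {Ω : Type*} (Y : ℕ → Ω → V) (ω : Ω) : ℕ∞ :=
  sInf ((↑) '' {t : ℕ | ∀ v : V, ∃ s ≤ t, Y s ω = v})

end GRW

namespace GRW
namespace Pf

open SimpleGraph
open scoped Classical
set_option linter.unusedSectionVars false

variable {n : ℕ}

/-- vertex `v` is saturated at time `t`. -/
def sat (x : ℕ → Fin n) (t : ℕ) (v : Fin n) : Prop :=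
  ∀ w, w ≠ v → s(v, w) ∈ GRW.traversed x t

noncomputable def Bset (x : ℕ → Fin n) (t : ℕ) : Finset (Fin n) :=
  Finset.univ.filter (sat x t)

def cov (x : ℕ → Fin n) (t : ℕ) : Prop :=
  ∀ v w : Fin n, v ≠ w → s(v, w) ∈ GRW.traversed x t

lemma traversed_mono {x : ℕ → Fin n} {t t' : ℕ} (h : t ≤ t') :
    GRW.traversed x t ⊆ GRW.traversed x t' := by
  rintro e ⟨s, hs0, hst, he⟩; exact ⟨s, hs0, hst.trans h, he⟩

lemma traversed_congr {x y : ℕ → Fin n} {t : ℕ} (h : ∀ i ≤ t, x i = y i) :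
    GRW.traversed x t = GRW.traversed y t := by
  ext e
  constructor <;> rintro ⟨s, hs0, hst, he⟩ <;> refine ⟨s, hs0, hst, ?_⟩
  · rw [he, h (s-1) (le_trans (Nat.sub_le s 1) hst), h s hst]
  · rw [he, h (s-1) (le_trans (Nat.sub_le s 1) hst), h s hst]

lemma sat_mono {x : ℕ → Fin n} {t t' : ℕ} (h : t ≤ t') {v : Fin n} (hs : sat x t v) :
    sat x t' v := fun w hw => traversed_mono h (hs w hw)

lemma sat_congr {x y : ℕ → Fin n} {t : ℕ} (h : ∀ i ≤ t, x i = y i) (v : Fin n) :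
    sat x t v ↔ sat y t v := by
  unfold sat; rw [traversed_congr h]

lemma Bset_mono {x : ℕ → Fin n} {t t' : ℕ} (h : t ≤ t') : Bset x t ⊆ Bset x t' := by
  intro v hv
  simp only [Bset, Finset.mem_filter, Finset.mem_univ, true_and] at hv ⊢
  exact sat_mono h hv

lemma mem_Bset {x : ℕ → Fin n} {t : ℕ} {v : Fin n} : v ∈ Bset x t ↔ sat x t v := by
  simp [Bset]

lemma Bset_congr {x y : ℕ → Fin n} {t : ℕ} (h : ∀ i ≤ t, x i = y i) :
    Bset x t = Bset y t := by
  ext v; rw [mem_Bset, mem_Bset, sat_congr h]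

lemma cov_mono {x : ℕ → Fin n} {t t' : ℕ} (h : t ≤ t') (hc : cov x t) : cov x t' :=
  fun v w hvw => traversed_mono h (hc v w hvw)

lemma cov_congr {x y : ℕ → Fin n} {t : ℕ} (h : ∀ i ≤ t, x i = y i) :
    cov x t ↔ cov y t := by
  unfold cov; rw [traversed_congr h]

lemma fresh_congr {x y : ℕ → Fin n} {t : ℕ} (h : ∀ i ≤ t, x i = y i) (v : Fin n) :
    freshNbrs ⊤ x t v = freshNbrs ⊤ y t v := by
  unfold freshNbrs; rw [traversed_congr h]

lemma mem_fresh {x : ℕ → Fin n} {t : ℕ} {v w : Fin n} :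
    w ∈ freshNbrs ⊤ x t v ↔ v ≠ w ∧ s(v, w) ∉ GRW.traversed x t := by
  simp [freshNbrs, top_adj]

lemma fresh_empty_iff_sat {x : ℕ → Fin n} {t : ℕ} {v : Fin n} :
    freshNbrs ⊤ x t v = ∅ ↔ sat x t v := by
  constructor
  · intro h w hw
    by_contra hmem
    have : w ∈ freshNbrs ⊤ x t v :=
      mem_fresh.2 ⟨Ne.symm hw, hmem⟩
    simp [h] at this
  · intro h
    ext w
    simp only [Set.mem_empty_iff_false, iff_false]
    intro hw
    rcases mem_fresh.1 hw with ⟨hne, hnt⟩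
    exact hnt (h w (Ne.symm hne))

lemma cov_of_all_sat {x : ℕ → Fin n} {t : ℕ} (h : ∀ v, sat x t v) : cov x t :=
  fun v w hvw => h v w (Ne.symm hvw)

lemma cov_iff_edgeSet {x : ℕ → Fin n} {t : ℕ} :
    cov x t ↔ (⊤ : SimpleGraph (Fin n)).edgeSet ⊆ GRW.traversed x t := by
  constructor
  · intro h e he
    rw [SimpleGraph.edgeSet_top] at he
    induction e with
    | _ v w => exact h v w (by simpa [Sym2.mk_isDiag_iff] using he)
  · intro h v w hvw
    exact h (by rw [SimpleGraph.edgeSet_top]; simpa [Sym2.mk_isDiag_iff] using hvw)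

lemma sat_zero_false (hn : 2 ≤ n) {x : ℕ → Fin n} {v : Fin n} : ¬ sat x 0 v := by
  intro h
  have hne : ∃ w : Fin n, w ≠ v := by
    rcases Finset.exists_mem_ne (s := (Finset.univ : Finset (Fin n)))
      (by simpa using by omega : 1 < Finset.univ.card) v with ⟨w, _, hw⟩
    exact ⟨w, hw⟩
  rcases hne with ⟨w, hw⟩
  rcases h w hw with ⟨s, hs0, hst, _⟩
  omega

lemma not_cov_zero (hn : 2 ≤ n) {x : ℕ → Fin n} : ¬ cov x 0 := by
  intro h
  have v0 : Fin n := ⟨0, by omega⟩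
  exact sat_zero_false hn (v := (⟨0, by omega⟩ : Fin n)) (fun w hw => h _ w (Ne.symm hw))


section Prob

variable {Ω : Type*} [MeasurableSpace Ω]

/-- trajectory of the process -/
def traj (X : ℕ → Ω → Fin n) (ω : Ω) : ℕ → Fin n := fun s => X s ω

def cell (X : ℕ → Ω → Fin n) (t : ℕ) (p : Fin (t+1) → Fin n) : Set Ω :=
  {ω | ∀ i : Fin (t+1), X i ω = p i}

def extp (t : ℕ) (p : Fin (t+1) → Fin n) : ℕ → Fin n :=
  fun i => p ⟨min i t, Nat.lt_succ_of_le (min_le_right i t)⟩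

variable {X : ℕ → Ω → Fin n}

lemma extp_of_le {t : ℕ} {p : Fin (t+1) → Fin n} {i : ℕ} (h : i ≤ t) :
    extp t p i = p ⟨i, Nat.lt_succ_of_le h⟩ := by
  unfold extp
  congr 1
  exact Fin.ext (by simpa using Nat.min_eq_left h)

lemma cell_eq_prefixEvent {t : ℕ} {p : Fin (t+1) → Fin n} :
    cell X t p = prefixEvent X t (extp t p) := by
  ext ω
  constructor
  · intro hω i hi
    rw [extp_of_le hi]
    exact hω ⟨i, Nat.lt_succ_of_le hi⟩
  · intro hω i
    have := hω i.1 (Nat.lt_succ_iff.1 i.2)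
    rwa [extp_of_le (Nat.lt_succ_iff.1 i.2), Fin.eta] at this

lemma mem_cell_agree {t : ℕ} {p : Fin (t+1) → Fin n} {ω : Ω} (hω : ω ∈ cell X t p) :
    ∀ i ≤ t, traj X ω i = extp t p i := by
  intro i hi
  rw [cell_eq_prefixEvent] at hω
  exact hω i hi

lemma self_mem_cell {t : ℕ} {ω : Ω} : ω ∈ cell X t (fun i => X i ω) := fun _ => rfl

lemma measX (hm : ∀ t, @Measurable Ω (Fin n) _ ⊤ (X t)) (t : ℕ) (S : Set (Fin n)) :
    MeasurableSet ((X t)⁻¹' S) :=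
  hm t (by exact MeasurableSpace.measurableSet_top)

lemma measurable_cell (hm : ∀ t, @Measurable Ω (Fin n) _ ⊤ (X t)) {t : ℕ}
    {p : Fin (t+1) → Fin n} : MeasurableSet (cell X t p) := by
  have : cell X t p = ⋂ i : Fin (t+1), (X i)⁻¹' {p i} := by
    ext ω; simp [cell, Set.mem_iInter]
  rw [this]
  exact MeasurableSet.iInter fun i => measX hm _ _

lemma cell_covers (t : ℕ) : (⋃ p : Fin (t+1) → Fin n, cell X t p) = Set.univ := by
  ext ω
  simp only [Set.mem_iUnion, Set.mem_univ, iff_true]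
  exact ⟨fun i => X i ω, self_mem_cell⟩

lemma cell_disjoint {t : ℕ} : Pairwise (Function.onFun Disjoint (cell X t (n := n))) := by
  intro p q hpq
  rw [Function.onFun, Set.disjoint_left]
  intro ω hp hq
  exact hpq (funext fun i => (hp i).symm.trans (hq i))

/-- Any event determined by the trajectory up to time `t` is measurable. -/
lemma measurableSet_of_prefix (hm : ∀ t, @Measurable Ω (Fin n) _ ⊤ (X t)) (t : ℕ)
    {E : Set Ω} (hE : ∀ ω ω', (∀ i ≤ t, X i ω = X i ω') → ω ∈ E → ω' ∈ E) :
    MeasurableSet E := by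
  have : E = ⋃ p : Fin (t+1) → Fin n, ⋃ _ : (cell X t p ∩ E).Nonempty, cell X t p := by
    ext ω
    simp only [Set.mem_iUnion]
    constructor
    · intro hω
      exact ⟨fun i => X i ω, ⟨ω, self_mem_cell, hω⟩, self_mem_cell⟩
    · rintro ⟨p, ⟨ω₀, hω₀c, hω₀E⟩, hωc⟩
      refine hE ω₀ ω (fun i hi => ?_) hω₀E
      have h1 := mem_cell_agree hω₀c i hi
      have h2 := mem_cell_agree hωc i hi
      exact h1.trans h2.symm
  rw [this]
  exact MeasurableSet.iUnion fun p => MeasurableSet.iUnion fun _ => measurable_cell hm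

lemma measure_eq_sum_cells {μ : Measure Ω} (hm : ∀ t, @Measurable Ω (Fin n) _ ⊤ (X t))
    (t : ℕ) {E : Set Ω} (hE : MeasurableSet E) :
    μ E = ∑ p : Fin (t+1) → Fin n, μ (cell X t p ∩ E) := by
  have hU : E = ⋃ p : Fin (t+1) → Fin n, (cell X t p ∩ E) := by
    conv_lhs => rw [← Set.univ_inter E, ← cell_covers (X := X) t]
    rw [Set.iUnion_inter]
  rw [← tsum_fintype (L := SummationFilter.unconditional _)]
  conv_lhs => rw [hU]
  exact measure_iUnion
    (fun p q hpq => (cell_disjoint hpq).mono Set.inter_subset_left Set.inter_subset_left)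
    (fun p => (measurable_cell hm).inter hE)

end Prob

section Prob2

variable {Ω : Type*} [MeasurableSpace Ω] {μ : Measure Ω} {X : ℕ → Ω → Fin n}

lemma cond_eq_r [IsFiniteMeasure μ] {A s : Set Ω} (hA : MeasurableSet A) (h0 : μ A ≠ 0)
    {r : ℝ≥0∞} (h : (μ[|A]) s = r) : μ (A ∩ s) = r * μ A := by
  rw [ProbabilityTheory.cond_apply hA μ s] at h
  have htop : μ A ≠ ⊤ := measure_ne_top μ A
  calc μ (A ∩ s) = μ A * ((μ A)⁻¹ * μ (A ∩ s)) := by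
        rw [← mul_assoc, ENNReal.mul_inv_cancel h0 htop, one_mul]
    _ = r * μ A := by rw [h, mul_comm]

lemma cond_eq_one [IsFiniteMeasure μ] {A s : Set Ω} (hA : MeasurableSet A) (h0 : μ A ≠ 0)
    (hs : MeasurableSet s) (h : (μ[|A]) s = 1) : μ (A ∩ sᶜ) = 0 := by
  have h1 : μ (A ∩ s) = μ A := by rw [cond_eq_r hA h0 h, one_mul]
  have h2 : μ (A ∩ s) + μ (A \ s) = μ A := measure_inter_add_diff A hs
  rw [h1] at h2
  rw [← Set.diff_eq]
  have h3 : μ A + μ (A \ s) = μ A + 0 := by simpa using h2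
  exact (ENNReal.add_right_inj (measure_ne_top μ A)).1 h3

/-- The a.s. event on which the walk always moves to a distinct vertex and takes a
fresh edge whenever possible. -/
def Good (X : ℕ → Ω → Fin n) : Set Ω :=
  {ω | ∀ t : ℕ, X t ω ≠ X (t+1) ω ∧
    ((freshNbrs ⊤ (traj X ω) t (X t ω)).Nonempty →
      X (t+1) ω ∈ freshNbrs ⊤ (traj X ω) t (X t ω))}

def Badt (X : ℕ → Ω → Fin n) (t : ℕ) : Set Ω :=
  {ω | ¬ (X t ω ≠ X (t+1) ω ∧
    ((freshNbrs ⊤ (traj X ω) t (X t ω)).Nonempty →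
      X (t+1) ω ∈ freshNbrs ⊤ (traj X ω) t (X t ω)))}

lemma good_compl_null [IsProbabilityMeasure μ]
    (hX : IsGRW (⊤ : SimpleGraph (Fin n)) μ X) : μ (Good X)ᶜ = 0 := by
  have hm := hX.1
  have hGc : (Good X)ᶜ = ⋃ t : ℕ, Badt X t := by
    ext ω; simp [Good, Badt]
  rw [hGc]
  refine measure_iUnion_null fun t => ?_
  have hcover : Badt X t ⊆ ⋃ p : Fin (t+1) → Fin n, (cell X t p ∩ Badt X t) := by
    intro ω hω
    exact Set.mem_iUnion.2 ⟨fun i => X i ω, self_mem_cell, hω⟩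
  refine measure_mono_null hcover (measure_iUnion_null fun p => ?_)
  set x := extp t p with hx
  have hcellA : cell X t p = prefixEvent X t x := cell_eq_prefixEvent
  have hA : MeasurableSet (prefixEvent X t x) := hcellA ▸ measurable_cell hm
  by_cases h0 : μ (prefixEvent X t x) = 0
  · exact measure_mono_null (by rw [hcellA]; exact Set.inter_subset_left) h0
  obtain ⟨hfresh, -, hadj⟩ := hX.2 t x h0
  set sAdj : Set Ω := {ω | (⊤ : SimpleGraph (Fin n)).Adj (x t) (X (t+1) ω)} with hsAdj
  have hsAdjm : MeasurableSet sAdj := measX hm (t+1) {w | (⊤ : SimpleGraph (Fin n)).Adj (x t) w}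
  have hadj0 : μ (prefixEvent X t x ∩ sAdjᶜ) = 0 := cond_eq_one hA h0 hsAdjm hadj
  set F := freshNbrs (⊤ : SimpleGraph (Fin n)) x t (x t) with hF
  -- trajectory agreement facts
  have key : ∀ ω ∈ cell X t p, freshNbrs ⊤ (traj X ω) t (X t ω) = F := by
    intro ω hω
    have hxt : X t ω = x t := mem_cell_agree hω t le_rfl
    rw [hxt, hF]
    exact fresh_congr (mem_cell_agree hω) (x t)
  by_cases hFne : F.Nonempty
  · set sF : Set Ω := {ω | X (t+1) ω ∈ F} with hsF
    have hsFm : MeasurableSet sF := measX hm (t+1) F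
    have hfresh0 : μ (prefixEvent X t x ∩ sFᶜ) = 0 :=
      cond_eq_one hA h0 hsFm (hfresh hFne)
    refine measure_mono_null (fun ω hω => ?_)
      (measure_union_null hadj0 hfresh0)
    obtain ⟨hωc, hωb⟩ := hω
    have hxt : X t ω = x t := mem_cell_agree hωc t le_rfl
    have hfr := key ω hωc
    simp only [Badt, Set.mem_setOf_eq, not_and_or, not_not, not_forall] at hωb
    rcases hωb with heq | hbad
    · left
      refine ⟨hcellA ▸ hωc, ?_⟩
      simp only [Set.mem_compl_iff, hsAdj, Set.mem_setOf_eq, top_adj]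
      rw [← hxt, ← heq]
      simp
    · right
      refine ⟨hcellA ▸ hωc, ?_⟩
      simp only [Set.mem_compl_iff, hsF, Set.mem_setOf_eq]
      rw [hfr] at hbad
      rcases hbad with ⟨-, hnm⟩
      exact hnm
  · -- fresh set empty: only adjacency can fail
    refine measure_mono_null (fun ω hω => ?_) hadj0
    obtain ⟨hωc, hωb⟩ := hω
    have hxt : X t ω = x t := mem_cell_agree hωc t le_rfl
    have hfr := key ω hωc
    simp only [Badt, Set.mem_setOf_eq, not_and_or, not_not, not_forall] at hωb
    rcases hωb with heq | hbad
    · refine ⟨hcellA ▸ hωc, ?_⟩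
      simp only [Set.mem_compl_iff, hsAdj, Set.mem_setOf_eq, top_adj]
      rw [← hxt, ← heq]
      simp
    · exact absurd (hfr ▸ hbad.1) hFne

end Prob2


section Prob3

variable {Ω : Type*} [MeasurableSpace Ω] {μ : Measure Ω} {X : ℕ → Ω → Fin n}

def Cset (X : ℕ → Ω → Fin n) (b t : ℕ) : Set Ω :=
  {ω | ¬ cov (traj X ω) t ∧ sat (traj X ω) t (X t ω) ∧ (Bset (traj X ω) t).card = b}

def Fev (X : ℕ → Ω → Fin n) (t : ℕ) : Set Ω :=
  {ω | ¬ cov (traj X ω) t ∧ ¬ sat (traj X ω) t (X t ω)}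

def Dset (X : ℕ → Ω → Fin n) (t : ℕ) : Set Ω :=
  {ω | X (t+1) ω ∈ Bset (traj X ω) t ∧ X (t+1) ω ≠ X t ω}

def Sset (X : ℕ → Ω → Fin n) (b : ℕ) : ℕ → Set Ω
  | 0 => ∅
  | (t+1) => Cset X b (t+1) ∩ {ω | (Bset (traj X ω) t).card < b}

lemma covE_prefix {t : ℕ} {ω ω' : Ω} (h : ∀ i ≤ t, X i ω = X i ω') :
    cov (traj X ω) t ↔ cov (traj X ω') t := cov_congr h

lemma Cset_prefix {b t : ℕ} {ω ω' : Ω} (h : ∀ i ≤ t, X i ω = X i ω')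
    (hω : ω ∈ Cset X b t) : ω' ∈ Cset X b t := by
  obtain ⟨h1, h2, h3⟩ := hω
  refine ⟨fun hc => h1 ((cov_congr h).2 hc), ?_, ?_⟩
  · have := (sat_congr h (X t ω)).1 h2
    rwa [h t le_rfl] at this
  · rwa [Bset_congr (x := traj X ω) (y := traj X ω') h] at h3

lemma measurable_Cset (hm : ∀ t, @Measurable Ω (Fin n) _ ⊤ (X t)) (b t : ℕ) :
    MeasurableSet (Cset X b t) :=
  measurableSet_of_prefix hm t fun _ _ h => Cset_prefix h

lemma measurable_Fev (hm : ∀ t, @Measurable Ω (Fin n) _ ⊤ (X t)) (t : ℕ) :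
    MeasurableSet (Fev X t) := by
  refine measurableSet_of_prefix hm t fun ω ω' h hω => ?_
  obtain ⟨h1, h2⟩ := hω
  refine ⟨fun hc => h1 ((cov_congr h).2 hc), fun hs => h2 ?_⟩
  have := (sat_congr h (X t ω')).2 hs
  rwa [← h t le_rfl] at this

lemma measurable_Dset (hm : ∀ t, @Measurable Ω (Fin n) _ ⊤ (X t)) (t : ℕ) :
    MeasurableSet (Dset X t) := by
  refine measurableSet_of_prefix hm (t+1) fun ω ω' h hω => ?_
  obtain ⟨h1, h2⟩ := hω
  have ht : ∀ i ≤ t, X i ω = X i ω' := fun i hi => h i (hi.trans (Nat.le_succ t))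
  constructor
  · rw [← h (t+1) le_rfl, ← Bset_congr (x := traj X ω) (y := traj X ω') ht]
    exact h1
  · rw [← h (t+1) le_rfl, ← h t (Nat.le_succ t)]
    exact h2

lemma measurable_Sset (hm : ∀ t, @Measurable Ω (Fin n) _ ⊤ (X t)) (b t : ℕ) :
    MeasurableSet (Sset X b t) := by
  cases t with
  | zero => exact MeasurableSet.empty
  | succ t =>
    refine (measurable_Cset hm b (t+1)).inter
      (measurableSet_of_prefix hm t fun ω ω' h hω => ?_)
    rwa [Set.mem_setOf_eq, ← Bset_congr (x := traj X ω) (y := traj X ω') h]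

lemma measurable_covE (hm : ∀ t, @Measurable Ω (Fin n) _ ⊤ (X t)) (t : ℕ) :
    MeasurableSet {ω | ¬ cov (traj X ω) t} :=
  measurableSet_of_prefix hm t fun ω ω' h hω hc => hω ((cov_congr h).2 hc)

/-- The quantitative step bound: from a saturated vertex with bad set of size `b`,
the walk stays in the bad set (excluding staying put) with probability at most
`(b-1)/(n-1)`. -/
lemma step_bound (hn : 2 ≤ n) [IsProbabilityMeasure μ]
    (hX : IsGRW (⊤ : SimpleGraph (Fin n)) μ X) (b t : ℕ) :
    μ (Cset X b t ∩ Dset X t) ≤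
      (((b-1 : ℕ) : ℝ≥0∞) / ((n-1 : ℕ) : ℝ≥0∞)) * μ (Cset X b t) := by
  have hm := hX.1
  have hCm : MeasurableSet (Cset X b t) := measurable_Cset hm b t
  have hCDm : MeasurableSet (Cset X b t ∩ Dset X t) := hCm.inter (measurable_Dset hm t)
  rw [measure_eq_sum_cells hm t hCDm, measure_eq_sum_cells hm t hCm, Finset.mul_sum]
  refine Finset.sum_le_sum fun p _ => ?_
  by_cases hne : (cell X t p ∩ Cset X b t).Nonempty
  swap
  · have : cell X t p ∩ (Cset X b t ∩ Dset X t) = ∅ := by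
      rw [Set.not_nonempty_iff_eq_empty] at hne
      rw [← Set.inter_assoc, hne, Set.empty_inter]
    simp [this]
  -- the cell is contained in Cset
  obtain ⟨ω₀, hω₀c, hω₀C⟩ := hne
  have hsub : cell X t p ⊆ Cset X b t := by
    intro ω hω
    refine Cset_prefix (fun i hi => ?_) hω₀C
    exact (mem_cell_agree hω₀c i hi).trans (mem_cell_agree hω i hi).symm
  have hcc : cell X t p ∩ Cset X b t = cell X t p := Set.inter_eq_left.2 hsub
  rw [hcc]
  set x := extp t p with hx
  have hcellA : cell X t p = prefixEvent X t x := cell_eq_prefixEvent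
  by_cases h0 : μ (prefixEvent X t x) = 0
  · rw [hcellA]
    refine le_trans (measure_mono Set.inter_subset_left) ?_
    rw [h0]; simp
  -- deterministic facts about the prefix
  have hω₀x : ∀ i ≤ t, traj X ω₀ i = x i := mem_cell_agree hω₀c
  have hxt : X t ω₀ = x t := hω₀x t le_rfl
  obtain ⟨hcov₀, hsat₀, hcard₀⟩ := hω₀C
  have hsatx : sat x t (x t) := by
    have := (sat_congr hω₀x (X t ω₀)).1 hsat₀
    rwa [hxt] at this
  have hcardx : (Bset x t).card = b := by
    rw [← Bset_congr hω₀x]; exact hcard₀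
  have hFempty : freshNbrs (⊤ : SimpleGraph (Fin n)) x t (x t) = ∅ :=
    fresh_empty_iff_sat.2 hsatx
  obtain ⟨-, hunif, -⟩ := hX.2 t x h0
  have hdeg : ((⊤ : SimpleGraph (Fin n)).degree (x t) : ℝ≥0∞) = ((n-1 : ℕ) : ℝ≥0∞) := by
    rw [SimpleGraph.complete_graph_degree, Fintype.card_fin]
  -- the target is inside a union of singleton-value events
  have hAm : MeasurableSet (prefixEvent X t x) := hcellA ▸ measurable_cell hm
  set s : Finset (Fin n) := Bset x t \ {x t} with hs
  have hsubD : cell X t p ∩ (Cset X b t ∩ Dset X t) ⊆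
      ⋃ w ∈ s, (prefixEvent X t x ∩ (X (t+1))⁻¹' {w}) := by
    rintro ω ⟨hωc, -, hD1, hD2⟩
    have hωx : ∀ i ≤ t, traj X ω i = x i := mem_cell_agree hωc
    have hxtω : X t ω = x t := hωx t le_rfl
    have hmem : X (t+1) ω ∈ s := by
      rw [hs]
      refine Finset.mem_sdiff.2 ⟨?_, ?_⟩
      · rw [← Bset_congr hωx]; exact hD1
      · rw [Finset.mem_singleton, ← hxtω]; exact hD2
    exact Set.mem_biUnion hmem ⟨hcellA ▸ hωc, rfl⟩
  have hstep : ∀ w ∈ s, μ (prefixEvent X t x ∩ (X (t+1))⁻¹' {w}) =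
      ((n-1 : ℕ) : ℝ≥0∞)⁻¹ * μ (prefixEvent X t x) := by
    intro w hw
    have hwne : x t ≠ w := by
      rw [hs, Finset.mem_sdiff, Finset.mem_singleton] at hw
      exact fun hc => hw.2 hc.symm
    have := hunif hFempty w ((SimpleGraph.top_adj (x t) w).2 hwne)
    have heq := cond_eq_r hAm h0 this
    rw [hdeg] at heq
    have hset : (X (t+1))⁻¹' {w} = {ω | X (t+1) ω = w} := by ext ω; simp
    rw [hset]; exact heq
  calc μ (cell X t p ∩ (Cset X b t ∩ Dset X t))
      ≤ μ (⋃ w ∈ s, (prefixEvent X t x ∩ (X (t+1))⁻¹' {w})) := measure_mono hsubD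
    _ ≤ ∑ w ∈ s, μ (prefixEvent X t x ∩ (X (t+1))⁻¹' {w}) := measure_biUnion_finset_le s _
    _ = s.card * (((n-1 : ℕ) : ℝ≥0∞)⁻¹ * μ (prefixEvent X t x)) := by
        rw [Finset.sum_congr rfl hstep, Finset.sum_const, nsmul_eq_mul]
    _ = ((b-1 : ℕ) : ℝ≥0∞) / ((n-1 : ℕ) : ℝ≥0∞) * μ (cell X t p) := by
        have hcards : s.card = b - 1 := by
          rw [hs, Finset.sdiff_singleton_eq_erase,
            Finset.card_erase_of_mem (mem_Bset.2 hsatx), hcardx]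
        rw [hcards, hcellA, div_eq_mul_inv, mul_assoc]

end Prob3


section Prob4

variable {Ω : Type*} [MeasurableSpace Ω] {μ : Measure Ω} {X : ℕ → Ω → Fin n}

lemma Cset_succ_subset (b t : ℕ) :
    Cset X b (t+1) ∩ Good X ⊆ Sset X b (t+1) ∪ (Cset X b t ∩ Dset X t) := by
  rintro ω ⟨⟨hc, hsat, hcard⟩, hg⟩
  set y := traj X ω with hy
  by_cases hlt : (Bset y t).card < b
  · exact Or.inl ⟨⟨hc, hsat, hcard⟩, hlt⟩
  · right
    have hble : (Bset y t).card ≤ b := by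
      rw [← hcard]; exact Finset.card_le_card (Bset_mono (Nat.le_succ t))
    have hbeq : (Bset y t).card = b := le_antisymm hble (not_lt.1 hlt)
    have hBeq : Bset y t = Bset y (t+1) :=
      Finset.eq_of_subset_of_card_le (Bset_mono (Nat.le_succ t)) (by rw [hcard, hbeq])
    have hX1 : X (t+1) ω ∈ Bset y t := by rw [hBeq]; exact mem_Bset.2 hsat
    have hne : X (t+1) ω ≠ X t ω := Ne.symm (hg t).1
    have hsatt : sat y t (X t ω) := by
      by_contra hns
      have hFne : (freshNbrs ⊤ y t (X t ω)).Nonempty := by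
        rw [Set.nonempty_iff_ne_empty]
        intro h
        exact hns (fresh_empty_iff_sat.1 h)
      have hmem := (hg t).2 hFne
      rcases mem_fresh.1 hmem with ⟨-, hnt⟩
      have hinB := (mem_Bset.1 hX1) (X t ω) (hg t).1
      rw [Sym2.eq_swap] at hinB
      exact hnt hinB
    have hcovt : ¬ cov y t := fun h => hc (cov_mono (Nat.le_succ t) h)
    exact ⟨⟨hcovt, hsatt, hbeq⟩, hX1, hne⟩

lemma Cset_zero (hn : 2 ≤ n) (b : ℕ) : Cset X b 0 = ∅ := by
  ext ω
  simp only [Cset, Set.mem_setOf_eq, Set.mem_empty_iff_false, iff_false, not_and]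
  intro _ hs
  exact absurd hs (sat_zero_false hn)

lemma Sset_disjoint (b : ℕ) : Pairwise (Function.onFun Disjoint (Sset X b)) := by
  have key : ∀ i j : ℕ, i < j → Sset X b i ∩ Sset X b j = ∅ := by
    intro i j hij
    ext ω
    simp only [Set.mem_inter_iff, Set.mem_empty_iff_false, iff_false, not_and]
    intro hi hj
    cases i with
    | zero => exact absurd hi (Set.notMem_empty ω)
    | succ i =>
      cases j with
      | zero => omega
      | succ j =>
        obtain ⟨⟨-, -, hci⟩, -⟩ := hi
        obtain ⟨-, hcj⟩ := hj
        have hmono : (Bset (traj X ω) (i+1)).card ≤ (Bset (traj X ω) j).card :=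
          Finset.card_le_card (Bset_mono (by omega))
      
        rw [hci] at hmono
        exact absurd hcj (by simpa using hmono)
  intro i j hij
  rw [Function.onFun, Set.disjoint_iff_inter_eq_empty]
  rcases lt_or_gt_of_ne hij with h | h
  · exact key i j h
  · rw [Set.inter_comm]; exact key j i h

lemma Cset_rec [IsProbabilityMeasure μ] (hn : 2 ≤ n)
    (hX : IsGRW (⊤ : SimpleGraph (Fin n)) μ X) (b t : ℕ) :
    μ (Cset X b (t+1)) ≤
      (((b-1 : ℕ) : ℝ≥0∞) / ((n-1 : ℕ) : ℝ≥0∞)) * μ (Cset X b t) + μ (Sset X b (t+1)) := by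
  have h1 : μ (Cset X b (t+1)) = μ (Cset X b (t+1) ∩ Good X) :=
    (measure_inter_conull (good_compl_null hX)).symm
  rw [h1]
  calc μ (Cset X b (t+1) ∩ Good X)
      ≤ μ (Sset X b (t+1) ∪ (Cset X b t ∩ Dset X t)) := measure_mono (Cset_succ_subset b t)
    _ ≤ μ (Sset X b (t+1)) + μ (Cset X b t ∩ Dset X t) := measure_union_le _ _
    _ ≤ μ (Sset X b (t+1)) + (((b-1 : ℕ) : ℝ≥0∞) / ((n-1 : ℕ) : ℝ≥0∞)) * μ (Cset X b t) := by
        exact add_le_add_right (step_bound hn hX b t) _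
    _ = _ := by rw [add_comm]

/-- Purely arithmetic lemma: geometric-type recursion bound in `ℝ≥0∞`. -/
lemma geom_sum_bound {c s : ℕ → ℝ≥0∞} {q : ℝ≥0∞} (hq : q < 1) (hc0 : c 0 = 0)
    (hcb : ∀ t, c t ≤ 1) (hrec : ∀ t, c (t+1) ≤ q * c t + s (t+1))
    (hs : ∑' t, s t ≤ 1) : ∑' t, c t ≤ (1 - q)⁻¹ := by
  refine ENNReal.tsum_le_of_sum_range_le fun m => ?_
  have hfin : ∀ m : ℕ, ∑ t ∈ Finset.range m, c t ≠ ⊤ := by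
    intro m
    refine ne_top_of_le_ne_top (b := (m : ℝ≥0∞)) (by simp) ?_
    calc ∑ t ∈ Finset.range m, c t ≤ ∑ _t ∈ Finset.range m, 1 :=
          Finset.sum_le_sum fun t _ => hcb t
      _ = m := by simp
  have hstep : ∀ m, ∑ t ∈ Finset.range m, c t ≤ q * ∑ t ∈ Finset.range m, c t + 1 := by
    intro m
    cases m with
    | zero => simp
    | succ m =>
      calc ∑ t ∈ Finset.range (m+1), c t
          = (∑ t ∈ Finset.range m, c (t+1)) + c 0 := Finset.sum_range_succ' c m
        _ = ∑ t ∈ Finset.range m, c (t+1) := by rw [hc0, add_zero]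
        _ ≤ ∑ t ∈ Finset.range m, (q * c t + s (t+1)) :=
            Finset.sum_le_sum fun t _ => hrec t
        _ = q * ∑ t ∈ Finset.range m, c t + ∑ t ∈ Finset.range m, s (t+1) := by
            rw [Finset.sum_add_distrib, Finset.mul_sum]
        _ ≤ q * ∑ t ∈ Finset.range (m+1), c t + 1 := by
            refine add_le_add ?_ ?_
            · refine mul_le_mul_right (Finset.sum_le_sum_of_subset ?_) q
              exact Finset.range_subset_range.2 (Nat.le_succ m)
            · refine le_trans ?_ hs
              calc ∑ t ∈ Finset.range m, s (t+1)
                  ≤ (∑ t ∈ Finset.range m, s (t+1)) + s 0 := le_self_add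
                _ = ∑ t ∈ Finset.range (m+1), s t := (Finset.sum_range_succ' s m).symm
                _ ≤ ∑' t, s t := ENNReal.sum_le_tsum _
  set a := ∑ t ∈ Finset.range m, c t with ha
  have h1 : a - q * a ≤ 1 := by
    rw [tsub_le_iff_right, add_comm]
    exact hstep m
  have h2 : a * (1 - q) = a - q * a := by
    rw [ENNReal.mul_sub fun _ _ => hfin m, mul_one, mul_comm]
  rw [ENNReal.le_inv_iff_mul_le, h2]
  exact h1

lemma tsum_Sset_le_one [IsProbabilityMeasure μ]
    (hm : ∀ t, @Measurable Ω (Fin n) _ ⊤ (X t)) (b : ℕ) :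
    ∑' t, μ (Sset X b t) ≤ 1 := by
  rw [← measure_iUnion (Sset_disjoint b) (measurable_Sset hm b)]
  exact prob_le_one

lemma tsum_Cset_le [IsProbabilityMeasure μ] (hn : 2 ≤ n)
    (hX : IsGRW (⊤ : SimpleGraph (Fin n)) μ X) {b : ℕ} (hb1 : 1 ≤ b) (hb2 : b ≤ n - 1) :
    ∑' t, μ (Cset X b t) ≤ ((n-1 : ℕ) : ℝ≥0∞) / ((n-b : ℕ) : ℝ≥0∞) := by
  set q : ℝ≥0∞ := ((b-1 : ℕ) : ℝ≥0∞) / ((n-1 : ℕ) : ℝ≥0∞) with hqdef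
  have hn1 : ((n-1 : ℕ) : ℝ≥0∞) ≠ 0 := by
    simp only [Ne, Nat.cast_eq_zero]; omega
  have hq1 : q + ((n-b : ℕ) : ℝ≥0∞) / ((n-1 : ℕ) : ℝ≥0∞) = 1 := by
    rw [hqdef, ENNReal.div_add_div_same, ← Nat.cast_add]
    have : b - 1 + (n - b) = n - 1 := by omega
    rw [this, ENNReal.div_self hn1 (by simp)]
  have hsub : 1 - q = ((n-b : ℕ) : ℝ≥0∞) / ((n-1 : ℕ) : ℝ≥0∞) := by
    have := ENNReal.eq_sub_of_add_eq (c := q) (b := 1)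
      (a := ((n-b : ℕ) : ℝ≥0∞) / ((n-1 : ℕ) : ℝ≥0∞))
      (by rw [hqdef]; exact (ENNReal.div_lt_top (by simp) hn1).ne)
      (by rw [add_comm]; exact hq1)
    exact this.symm
  have hqlt : q < 1 := by
    rw [hqdef, ENNReal.div_lt_iff (Or.inl hn1) (Or.inl (by simp))]
    rw [one_mul, Nat.cast_lt]
    omega
  have := geom_sum_bound (c := fun t => μ (Cset X b t)) (s := fun t => μ (Sset X b t))
    hqlt (by show μ (Cset X b 0) = 0; rw [Cset_zero hn]; simp) (fun t => prob_le_one)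
    (fun t => Cset_rec hn hX b t) (tsum_Sset_le_one hX.1 b)
  refine le_trans this ?_
  rw [hsub, ENNReal.inv_div (Or.inl (by simp)) (Or.inl hn1)]

end Prob4


section Prob5

variable {Ω : Type*} [MeasurableSpace Ω] {μ : Measure Ω} {X : ℕ → Ω → Fin n}

noncomputable def travF (x : ℕ → Fin n) (t : ℕ) : Finset (Sym2 (Fin n)) :=
  Finset.univ.filter (· ∈ GRW.traversed x t)

lemma mem_travF {x : ℕ → Fin n} {t : ℕ} {e : Sym2 (Fin n)} :
    e ∈ travF x t ↔ e ∈ GRW.traversed x t := by simp [travF]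

lemma travF_mono {x : ℕ → Fin n} {t t' : ℕ} (h : t ≤ t') : travF x t ⊆ travF x t' :=
  fun e he => mem_travF.2 (traversed_mono h (mem_travF.1 he))

lemma travF_card_le {x : ℕ → Fin n} (hadj : ∀ s : ℕ, x s ≠ x (s+1)) (t : ℕ) :
    (travF x t).card ≤ n.choose 2 := by
  have hsub : travF x t ⊆ (⊤ : SimpleGraph (Fin n)).edgeFinset := by
    intro e he
    rcases mem_travF.1 he with ⟨s, hs0, hst, he'⟩
    rw [SimpleGraph.mem_edgeFinset, SimpleGraph.edgeSet_top, he']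
    have : s - 1 + 1 = s := by omega
    have hne : x (s-1) ≠ x s := by
      have h2 := hadj (s-1)
      rwa [this] at h2
    simpa [Sym2.mk_isDiag_iff] using hne
  calc (travF x t).card ≤ (⊤ : SimpleGraph (Fin n)).edgeFinset.card := Finset.card_le_card hsub
    _ = n.choose 2 := by
        rw [SimpleGraph.card_edgeFinset_top_eq_card_choose_two, Fintype.card_fin]

lemma measurable_Good (hm : ∀ t, @Measurable Ω (Fin n) _ ⊤ (X t)) :
    MeasurableSet (Good X) := by
  have : Good X = ⋂ t : ℕ, {ω | X t ω ≠ X (t+1) ω ∧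
      ((freshNbrs ⊤ (traj X ω) t (X t ω)).Nonempty →
        X (t+1) ω ∈ freshNbrs ⊤ (traj X ω) t (X t ω))} := by
    ext ω; simp [Good, Set.mem_iInter]
  rw [this]
  refine MeasurableSet.iInter fun t => measurableSet_of_prefix hm (t+1) ?_
  intro ω ω' h hω
  have ht : ∀ i ≤ t, X i ω = X i ω' := fun i hi => h i (hi.trans (Nat.le_succ t))
  have hfr : freshNbrs ⊤ (traj X ω') t (X t ω') = freshNbrs ⊤ (traj X ω) t (X t ω) := by
    rw [← ht t le_rfl]
    exact fresh_congr (x := traj X ω') (y := traj X ω) (fun i hi => (ht i hi).symm) (X t ω)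
  obtain ⟨h1, h2⟩ := hω
  constructor
  · rw [← ht t le_rfl, ← h (t+1) le_rfl]; exact h1
  · rw [hfr, ← h (t+1) le_rfl]; exact h2

lemma fresh_count_le (hn : 2 ≤ n) {ω : Ω} (hω : ω ∈ Good X) (m : ℕ) :
    ∑ t ∈ Finset.range m, (Fev X t ∩ Good X).indicator (1 : Ω → ℝ≥0∞) ω ≤
      (n.choose 2 : ℝ≥0∞) := by
  set y := traj X ω with hy
  have key : ∀ m, ∑ t ∈ Finset.range m, (Fev X t ∩ Good X).indicator (1 : Ω → ℝ≥0∞) ω ≤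
      ((travF y m).card : ℝ≥0∞) := by
    intro m
    induction m with
    | zero => simp
    | succ m ih =>
      rw [Finset.sum_range_succ]
      by_cases hF : ω ∈ Fev X m
      · have hind : (Fev X m ∩ Good X).indicator (1 : Ω → ℝ≥0∞) ω = 1 :=
          Set.indicator_of_mem (Set.mem_inter hF hω) _
        rw [hind]
        obtain ⟨hcov, hsat⟩ := hF
        have hFne : (freshNbrs ⊤ y m (X m ω)).Nonempty := by
          rw [Set.nonempty_iff_ne_empty]
          exact fun h => hsat (fresh_empty_iff_sat.1 h)
        have hmem := (hω m).2 hFne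
        rcases mem_fresh.1 hmem with ⟨-, hnt⟩
        set e : Sym2 (Fin n) := s(X m ω, X (m+1) ω) with he
        have henotin : e ∉ travF y m := fun hc => hnt (mem_travF.1 hc)
        have hein : e ∈ travF y (m+1) := by
          refine mem_travF.2 ⟨m+1, Nat.succ_pos m, le_rfl, ?_⟩
          simp only [he, Nat.add_sub_cancel]
          rfl
        have hins : insert e (travF y m) ⊆ travF y (m+1) := by
          intro f hf
          rcases Finset.mem_insert.1 hf with rfl | hf
          · exact hein
          · exact travF_mono (Nat.le_succ m) hf
        calc (∑ t ∈ Finset.range m, (Fev X t ∩ Good X).indicator (1 : Ω → ℝ≥0∞) ω) + 1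
            ≤ ((travF y m).card : ℝ≥0∞) + 1 := add_le_add_left ih 1
          _ = ((insert e (travF y m)).card : ℝ≥0∞) := by
              rw [Finset.card_insert_of_notMem henotin]; push_cast; ring
          _ ≤ ((travF y (m+1)).card : ℝ≥0∞) := Nat.cast_le.mpr (Finset.card_le_card hins)
      · have hind : (Fev X m ∩ Good X).indicator (1 : Ω → ℝ≥0∞) ω = 0 :=
          Set.indicator_of_notMem (fun hc => hF hc.1) _
        rw [hind, add_zero]
        exact ih.trans (Nat.cast_le.mpr (Finset.card_le_card (travF_mono (Nat.le_succ m))))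
  refine (key m).trans ?_
  have hadj : ∀ s : ℕ, y s ≠ y (s+1) := fun s => (hω s).1
  exact Nat.cast_le.mpr (travF_card_le hadj m)

lemma tsum_Fev_le [IsProbabilityMeasure μ] (hn : 2 ≤ n)
    (hX : IsGRW (⊤ : SimpleGraph (Fin n)) μ X) :
    ∑' t, μ (Fev X t) ≤ (n.choose 2 : ℝ≥0∞) := by
  have hm := hX.1
  have h1 : ∀ t, μ (Fev X t) = μ (Fev X t ∩ Good X) := fun t =>
    (measure_inter_conull (good_compl_null hX)).symm
  simp_rw [h1]
  have h2 : ∀ t, μ (Fev X t ∩ Good X) =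
      ∫⁻ ω, (Fev X t ∩ Good X).indicator (1 : Ω → ℝ≥0∞) ω ∂μ := by
    intro t
    rw [lintegral_indicator ((measurable_Fev hm t).inter (measurable_Good hm))]
    simp
  simp_rw [h2]
  rw [← lintegral_tsum (fun t => (measurable_one.indicator
    ((measurable_Fev hm t).inter (measurable_Good hm))).aemeasurable)]
  calc ∫⁻ ω, ∑' t, (Fev X t ∩ Good X).indicator (1 : Ω → ℝ≥0∞) ω ∂μ
      ≤ ∫⁻ _x, (n.choose 2 : ℝ≥0∞) ∂μ := by
        refine lintegral_mono fun ω => ?_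
        by_cases hω : ω ∈ Good X
        · exact ENNReal.tsum_le_of_sum_range_le (fresh_count_le hn hω)
        · have : ∀ t, (Fev X t ∩ Good X).indicator (1 : Ω → ℝ≥0∞) ω = 0 :=
            fun t => Set.indicator_of_notMem (fun hc => hω hc.2) _
          simp [this]
    _ = (n.choose 2 : ℝ≥0∞) := by simp

end Prob5


section Final

variable {Ω : Type*} [MeasurableSpace Ω] {μ : Measure Ω} {X : ℕ → Ω → Fin n}

lemma enat_coe_eq_tsum (m : ℕ∞) :
    (m : ℝ≥0∞) = ∑' t : ℕ, (if ((t : ℕ∞) < m) then (1:ℝ≥0∞) else 0) := by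
  induction m using ENat.recTopCoe with
  | top =>
    have : ∀ t : ℕ, (if ((t : ℕ∞) < (⊤ : ℕ∞)) then (1:ℝ≥0∞) else 0) = 1 := by
      intro t
      rw [if_pos (lt_top_iff_ne_top.2 (ENat.coe_ne_top t))]
    rw [tsum_congr this, tsum_const_eq_top_of_ne_zero one_ne_zero]
    simp
  | coe k =>
    have hz : ∀ t ∉ Finset.range k, (if ((t : ℕ∞) < (k : ℕ∞)) then (1:ℝ≥0∞) else 0) = 0 := by
      intro t ht
      rw [if_neg]
      simp only [Finset.mem_range] at ht
      exact fun hc => ht (Nat.cast_lt.1 hc)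
    rw [tsum_eq_sum hz]
    have : ∀ t ∈ Finset.range k, (if ((t : ℕ∞) < (k : ℕ∞)) then (1:ℝ≥0∞) else 0) = 1 := by
      intro t ht
      rw [if_pos (Nat.cast_lt.2 (Finset.mem_range.1 ht))]
    rw [Finset.sum_congr rfl this]
    simp

lemma coverTime_gt_iff (ω : Ω) (t : ℕ) :
    (t : ℕ∞) < edgeCoverTime (⊤ : SimpleGraph (Fin n)) X ω ↔ ¬ cov (traj X ω) t := by
  unfold edgeCoverTime
  constructor
  · intro h hcov
    have : (t : ℕ∞) ∈ (↑) '' {s : ℕ | (⊤ : SimpleGraph (Fin n)).edgeSet ⊆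
        GRW.traversed (fun s => X s ω) s} :=
      ⟨t, cov_iff_edgeSet.1 hcov, rfl⟩
    exact absurd (sInf_le this) (not_le.2 h)
  · intro hcov
    have hge : ((t+1 : ℕ) : ℕ∞) ≤ sInf ((↑) '' {s : ℕ | (⊤ : SimpleGraph (Fin n)).edgeSet ⊆
        GRW.traversed (fun s => X s ω) s}) := by
      refine le_sInf ?_
      rintro a ⟨s, hs, rfl⟩
      have hcovs : cov (traj X ω) s := cov_iff_edgeSet.2 hs
      have hts : t < s := by
        by_contra hle
        exact hcov (cov_mono (not_lt.1 hle) hcovs)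
      exact_mod_cast hts
    refine lt_of_lt_of_le ?_ hge
    exact_mod_cast Nat.lt_succ_self t

lemma notcov_subset (hn : 2 ≤ n) (t : ℕ) :
    {ω : Ω | ¬ cov (traj X ω) t} ⊆
      Fev X t ∪ ⋃ b ∈ Finset.Icc 1 (n-1), Cset X b t := by
  intro ω hω
  by_cases hsat : sat (traj X ω) t (X t ω)
  · right
    set b := (Bset (traj X ω) t).card with hb
    have hb1 : 1 ≤ b := by
      rw [hb]
      exact Finset.card_pos.2 ⟨X t ω, mem_Bset.2 hsat⟩
    have hbn : b ≤ n := by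
      rw [hb]
      calc (Bset (traj X ω) t).card ≤ (Finset.univ : Finset (Fin n)).card :=
            Finset.card_le_card (Finset.subset_univ _)
        _ = n := by simp
    have hbne : b ≠ n := by
      intro hc
      have huniv : Bset (traj X ω) t = Finset.univ := by
        refine Finset.eq_univ_of_card _ ?_
        rw [← hb, hc]; simp
      refine hω (cov_of_all_sat fun v => ?_)
      have : v ∈ Bset (traj X ω) t := huniv ▸ Finset.mem_univ v
      exact mem_Bset.1 this
    refine Set.mem_biUnion (show b ∈ Finset.Icc 1 (n-1) by rw [Finset.mem_Icc]; omega)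
      ⟨hω, hsat, rfl⟩
  · exact Or.inl ⟨hω, hsat⟩

lemma div_cast_eq_ofReal (hn : 2 ≤ n) {i : ℕ} (hi1 : 1 ≤ i) (hi2 : i ≤ n - 1) :
    ((n-1 : ℕ) : ℝ≥0∞) / ((n-i : ℕ) : ℝ≥0∞) =
      ENNReal.ofReal (((n : ℝ) - 1) / ((n : ℝ) - (i : ℝ))) := by
  have h1 : ((n : ℝ) - 1) = ((n - 1 : ℕ) : ℝ) := by
    rw [Nat.cast_sub (by omega)]; simp
  have h2 : ((n : ℝ) - (i : ℝ)) = ((n - i : ℕ) : ℝ) := by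
    rw [Nat.cast_sub (by omega)]
  have hpos : (0:ℝ) < (n : ℝ) - (i : ℝ) := by
    rw [h2]
    exact_mod_cast Nat.pos_of_ne_zero (by omega)
  rw [ENNReal.ofReal_div_of_pos hpos, h1, h2, ENNReal.ofReal_natCast, ENNReal.ofReal_natCast]

end Final

end Pf
end GRW

/-- for the complete graph `Kₙ` and any rule `𝓡` (i.e. for any process
satisfying the greedy random walk conditions), the expected edge cover time satisfies
`𝔼[C_E(Kₙ)] ≤ C(n,2) + ∑_{i=1}^{n-1} (n-1)/(n-i)`. -/
theorem grw_stmt17 (n : ℕ) (hn : 2 ≤ n)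
    {Ω : Type*} [MeasurableSpace Ω] (μ : MeasureTheory.Measure Ω)
    [MeasureTheory.IsProbabilityMeasure μ] (X : ℕ → Ω → Fin n)
    (hX : GRW.IsGRW (⊤ : SimpleGraph (Fin n)) μ X) :
    ∫⁻ ω, ((GRW.edgeCoverTime (⊤ : SimpleGraph (Fin n)) X ω : ℕ∞) : ℝ≥0∞) ∂μ ≤
      (n.choose 2 : ℝ≥0∞) +
        ENNReal.ofReal (∑ i ∈ Finset.Icc 1 (n - 1), ((n : ℝ) - 1) / ((n : ℝ) - (i : ℝ))) := by
  classical
  open GRW.Pf in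
  have hm := hX.1
  have hpt : ∀ ω, ((GRW.edgeCoverTime (⊤ : SimpleGraph (Fin n)) X ω : ℕ∞) : ℝ≥0∞) =
      ∑' t : ℕ, ({ω' : Ω | ¬ GRW.Pf.cov (GRW.Pf.traj X ω') t}).indicator (1 : Ω → ℝ≥0∞) ω := by
    intro ω
    rw [GRW.Pf.enat_coe_eq_tsum]
    refine tsum_congr fun t => ?_
    rw [Set.indicator_apply]
    by_cases h : ¬ GRW.Pf.cov (GRW.Pf.traj X ω) t
    · rw [if_pos ((GRW.Pf.coverTime_gt_iff ω t).2 h)]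
      simp [Set.mem_setOf_eq, h]
    · rw [if_neg (fun hc => h ((GRW.Pf.coverTime_gt_iff ω t).1 hc))]
      simp [Set.mem_setOf_eq, not_not.1 h]
  calc ∫⁻ ω, ((GRW.edgeCoverTime (⊤ : SimpleGraph (Fin n)) X ω : ℕ∞) : ℝ≥0∞) ∂μ
      = ∑' t : ℕ, μ {ω : Ω | ¬ GRW.Pf.cov (GRW.Pf.traj X ω) t} := by
        simp_rw [hpt]
        rw [lintegral_tsum (fun t => (measurable_one.indicator
          (GRW.Pf.measurable_covE hm t)).aemeasurable)]
        refine tsum_congr fun t => ?_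
        rw [lintegral_indicator (GRW.Pf.measurable_covE hm t)]
        simp
    _ ≤ ∑' t : ℕ, (μ (GRW.Pf.Fev X t) +
          ∑ b ∈ Finset.Icc 1 (n-1), μ (GRW.Pf.Cset X b t)) := by
        refine ENNReal.tsum_le_tsum fun t => ?_
        calc μ {ω : Ω | ¬ GRW.Pf.cov (GRW.Pf.traj X ω) t}
            ≤ μ (GRW.Pf.Fev X t ∪ ⋃ b ∈ Finset.Icc 1 (n-1), GRW.Pf.Cset X b t) :=
              measure_mono (GRW.Pf.notcov_subset hn t)
          _ ≤ μ (GRW.Pf.Fev X t) + μ (⋃ b ∈ Finset.Icc 1 (n-1), GRW.Pf.Cset X b t) :=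
              measure_union_le _ _
          _ ≤ _ := add_le_add_right (measure_biUnion_finset_le _ _) _
    _ = (∑' t, μ (GRW.Pf.Fev X t)) +
          ∑ b ∈ Finset.Icc 1 (n-1), ∑' t, μ (GRW.Pf.Cset X b t) := by
        rw [ENNReal.tsum_add]
        congr 1
        exact Summable.tsum_finsetSum fun b _ => ENNReal.summable
    _ ≤ (n.choose 2 : ℝ≥0∞) +
          ∑ b ∈ Finset.Icc 1 (n-1), ((n-1 : ℕ) : ℝ≥0∞) / ((n-b : ℕ) : ℝ≥0∞) := by
        refine add_le_add (GRW.Pf.tsum_Fev_le hn hX) (Finset.sum_le_sum fun b hb => ?_)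
        rw [Finset.mem_Icc] at hb
        exact GRW.Pf.tsum_Cset_le hn hX hb.1 hb.2
    _ = (n.choose 2 : ℝ≥0∞) +
          ENNReal.ofReal (∑ i ∈ Finset.Icc 1 (n - 1), ((n : ℝ) - 1) / ((n : ℝ) - (i : ℝ))) := by
        congr 1
        rw [ENNReal.ofReal_sum_of_nonneg]
        · refine Finset.sum_congr rfl fun i hi => ?_
          rw [Finset.mem_Icc] at hi
          exact GRW.Pf.div_cast_eq_ofReal hn hi.1 hi.2
        · intro i hi
          rw [Finset.mem_Icc] at hi
          have h1 : (1:ℝ) ≤ (n:ℝ) := by exact_mod_cast by omega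
          have h2 : (i:ℝ) ≤ (n:ℝ) := by exact_mod_cast by omega
          exact div_nonneg (by linarith) (by linarith)
end

section
/- Let $G = (V,E)$ be a finite graph all of whose vertices have even degree, and suppose the expected vertex cover time of $G$ by simple random walk (from any start vertex) is at most $C$. Then for any rule $\mathcal{R}$, the expected edge cover time of $G$ by greedy random walk is at most $|E| + C$. -/
open MeasureTheory ProbabilityTheory ENNReal

set_option linter.unusedSectionVars false

namespace GRWAux

open GRW

attribute [local instance 10] Classical.propDecidable

variable {V : Type*} [Fintype V] [DecidableEq V]

section Comb

variable (G : SimpleGraph V) [DecidableRel G.Adj]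

/-- A time at which all incident edges are traversed. -/
def Simple (p : ℕ → V) (s : ℕ) : Prop := freshNbrs G p s (p s) = ∅

/-- A good (greedy) trajectory. -/
def Gd (p : ℕ → V) : Prop :=
  (∀ s, G.Adj (p s) (p (s + 1))) ∧
    ∀ s, (freshNbrs G p s (p s)).Nonempty → p (s + 1) ∈ freshNbrs G p s (p s)

lemma traversed_zero (p : ℕ → V) : traversed p 0 = ∅ := by
  ext e
  simp only [traversed, Set.mem_setOf_eq, Set.mem_empty_iff_false, iff_false]
  rintro ⟨s, h1, h2, -⟩; omega

lemma traversed_succ (p : ℕ → V) (t : ℕ) :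
    traversed p (t + 1) = insert s(p t, p (t + 1)) (traversed p t) := by
  ext e
  simp only [traversed, Set.mem_setOf_eq, Set.mem_insert_iff]
  constructor
  · rintro ⟨s, hs0, hst, rfl⟩
    rcases eq_or_lt_of_le hst with h | h
    · left; subst h; simp
    · right; exact ⟨s, hs0, by omega, rfl⟩
  · rintro (h | ⟨s, hs0, hst, rfl⟩)
    · exact ⟨t + 1, by omega, le_rfl, by simpa using h⟩
    · exact ⟨s, hs0, by omega, rfl⟩

lemma traversed_mono (p : ℕ → V) {s t : ℕ} (h : s ≤ t) : traversed p s ⊆ traversed p t := by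
  rintro e ⟨u, h1, h2, rfl⟩; exact ⟨u, h1, h2.trans h, rfl⟩

lemma traversed_congr {p q : ℕ → V} {t : ℕ} (h : ∀ i ≤ t, p i = q i) :
    traversed p t = traversed q t := by
  ext e
  constructor
  · rintro ⟨s, h1, h2, rfl⟩
    exact ⟨s, h1, h2, by rw [h _ (by omega), h _ h2]⟩
  · rintro ⟨s, h1, h2, rfl⟩
    exact ⟨s, h1, h2, by rw [h _ (by omega), h _ h2]⟩

lemma fresh_congr {p q : ℕ → V} {s t : ℕ} (hst : s ≤ t) (h : ∀ i ≤ t, p i = q i) :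
    freshNbrs G p s (p s) = freshNbrs G q s (q s) := by
  have h1 : traversed p s = traversed q s :=
    traversed_congr (fun i hi => h i (hi.trans hst))
  rw [freshNbrs, freshNbrs, h1, h s hst]

lemma simple_congr {p q : ℕ → V} {s t : ℕ} (hst : s ≤ t) (h : ∀ i ≤ t, p i = q i) :
    Simple G p s ↔ Simple G q s := by
  rw [Simple, Simple, fresh_congr G hst h]

lemma count_congr {p q : ℕ → V} {s t : ℕ} (hst : s ≤ t) (h : ∀ i ≤ t, p i = q i) :
    Nat.count (Simple G p) s = Nat.count (Simple G q) s := by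
  rw [Nat.count_eq_card_filter_range, Nat.count_eq_card_filter_range]
  congr 1
  apply Finset.filter_congr
  intro u hu
  simp only [Finset.mem_range] at hu
  exact simple_congr G (by omega) h

lemma greedy_new {p : ℕ → V} (hp : Gd G p) {s : ℕ} (hs : ¬ Simple G p s) :
    s(p s, p (s + 1)) ∉ traversed p s := by
  have hne : (freshNbrs G p s (p s)).Nonempty :=
    Set.nonempty_iff_ne_empty.2 hs
  exact (hp.2 s hne).2

lemma simple_traversed {p : ℕ → V} {s : ℕ} (hs : Simple G p s) {w : V}
    (hw : G.Adj (p s) w) : s(p s, w) ∈ traversed p s := by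
  by_contra h
  have : w ∈ freshNbrs G p s (p s) := ⟨hw, h⟩
  rw [Simple] at hs
  rw [hs] at this
  exact this

lemma traversed_succ_simple {p : ℕ → V} (hp : Gd G p) {s : ℕ} (hs : Simple G p s) :
    traversed p (s + 1) = traversed p s := by
  rw [traversed_succ, Set.insert_eq_self]
  exact simple_traversed G hs (hp.1 s)

lemma greedy_card {p : ℕ → V} (hp : Gd G p) (t : ℕ) :
    ((Finset.range t).filter (fun s => ¬ Simple G p s)).card ≤ G.edgeFinset.card := by
  apply Finset.card_le_card_of_injOn (fun s => s(p s, p (s + 1)))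
  · intro s hs
    rw [Finset.mem_coe, SimpleGraph.mem_edgeFinset]
    exact hp.1 s
  · intro a ha b hb hab
    simp only [Finset.coe_filter, Set.mem_setOf_eq, Finset.mem_range] at ha hb
    by_contra hne
    have hab' : s(p a, p (a + 1)) = s(p b, p (b + 1)) := hab
    rcases Nat.lt_or_ge a b with h | h
    · have h1 : s(p a, p (a + 1)) ∈ traversed p b :=
        traversed_mono p (by omega : a + 1 ≤ b) ⟨a + 1, by omega, le_rfl, by simp⟩
      rw [hab'] at h1
      exact greedy_new G hp hb.2 h1
    · have hba : b < a := by omega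
      have h1 : s(p b, p (b + 1)) ∈ traversed p a :=
        traversed_mono p (by omega : b + 1 ≤ a) ⟨b + 1, by omega, le_rfl, by simp⟩
      rw [← hab'] at h1
      exact greedy_new G hp ha.2 h1

lemma simple_infinite {p : ℕ → V} (hp : Gd G p) : {s | Simple G p s}.Infinite := by
  apply Set.infinite_of_forall_exists_gt
  intro a
  by_contra hcon
  push_neg at hcon
  have hsub : Finset.Ico (a + 1) (a + 2 + G.edgeFinset.card) ⊆
      (Finset.range (a + 2 + G.edgeFinset.card)).filter (fun s => ¬ Simple G p s) := by
    intro s hs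
    simp only [Finset.mem_Ico] at hs
    simp only [Finset.mem_filter, Finset.mem_range]
    refine ⟨by omega, fun h => ?_⟩
    have := hcon s h
    omega
  have h1 := Finset.card_le_card hsub
  have h2 := greedy_card G hp (a + 2 + G.edgeFinset.card)
  rw [Nat.card_Ico] at h1
  omega

lemma simple_nth {p : ℕ → V} (hp : Gd G p) (k : ℕ) :
    Simple G p (Nat.nth (Simple G p) k) :=
  Nat.nth_mem_of_infinite (simple_infinite G hp) k

lemma count_nth' {p : ℕ → V} (hp : Gd G p) (k : ℕ) :
    Nat.count (Simple G p) (Nat.nth (Simple G p) k) = k :=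
  Nat.count_nth (fun hf => absurd hf (simple_infinite G hp))

lemma nth_le {p : ℕ → V} (hp : Gd G p) (k : ℕ) :
    Nat.nth (Simple G p) k ≤ k + G.edgeFinset.card := by
  have h1 : ((Finset.range (Nat.nth (Simple G p) k)).filter (fun s => Simple G p s)).card
      = k := by
    rw [← Nat.count_eq_card_filter_range]
    exact count_nth' G hp k
  have h2 := greedy_card G hp (Nat.nth (Simple G p) k)
  have h3 : ((Finset.range (Nat.nth (Simple G p) k)).filter (fun s => Simple G p s)).card +
      ((Finset.range (Nat.nth (Simple G p) k)).filter (fun s => ¬ Simple G p s)).card =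
      (Finset.range (Nat.nth (Simple G p) k)).card :=
    Finset.card_filter_add_card_filter_not (fun s => Simple G p s)
  rw [Finset.card_range] at h3
  omega

lemma not_simple_between {p : ℕ → V} (hp : Gd G p) {k s : ℕ}
    (h1 : Nat.nth (Simple G p) k < s) (h2 : s < Nat.nth (Simple G p) (k + 1)) :
    ¬ Simple G p s := by
  intro hs
  have hnc : Nat.nth (Simple G p) (Nat.count (Simple G p) s) = s := Nat.nth_count hs
  have hc1 : Nat.count (Simple G p) (Nat.nth (Simple G p) k + 1) = k + 1 := by
    rw [Nat.count_succ, count_nth' G hp, if_pos (simple_nth G hp k)]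
  have hk : k + 1 ≤ Nat.count (Simple G p) s := by
    rw [← hc1]
    exact Nat.count_monotone _ (by omega)
  have h4 : Nat.nth (Simple G p) (k + 1) ≤ s := by
    calc Nat.nth (Simple G p) (k + 1)
        ≤ Nat.nth (Simple G p) (Nat.count (Simple G p) s) :=
          (Nat.nth_strictMono (simple_infinite G hp)).monotone hk
      _ = s := hnc
  omega

lemma not_simple_before {p : ℕ → V} {s : ℕ} (h : s < Nat.nth (Simple G p) 0) :
    ¬ Simple G p s := by
  intro hs
  have h1 : sInf (Set.ofPred (Simple G p)) ≤ s := Nat.sInf_le hs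
  rw [Nat.nth_zero] at h
  omega

/-- Number of traversed edges incident to `v`. -/
noncomputable def D (p : ℕ → V) (t : ℕ) (v : V) : ℕ :=
  (G.incidenceSet v ∩ traversed p t).ncard

lemma D_zero (p : ℕ → V) (v : V) : D G p 0 v = 0 := by
  rw [D, traversed_zero, Set.inter_empty, Set.ncard_empty]

lemma D_succ_greedy {p : ℕ → V} (hp : Gd G p) {s : ℕ} (hs : ¬ Simple G p s) (v : V) :
    D G p (s + 1) v = D G p s v +
      ((if v = p s then 1 else 0) + (if v = p (s + 1) then 1 else 0)) := by
  have hnew := greedy_new G hp hs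
  have hadj := hp.1 s
  have hne : p s ≠ p (s + 1) := hadj.ne
  unfold D
  rw [traversed_succ]
  by_cases hinc : s(p s, p (s + 1)) ∈ G.incidenceSet v
  · rw [Set.inter_insert_of_mem hinc,
      Set.ncard_insert_of_notMem (fun hc => hnew hc.2) (Set.toFinite _)]
    have hv : v = p s ∨ v = p (s + 1) := by
      have h2 := hinc.2
      rw [Sym2.mem_iff] at h2
      tauto
    rcases hv with hv | hv
    · rw [if_pos hv, if_neg (fun h => hne (hv.symm.trans h))]
    · rw [if_pos hv, if_neg (fun h => hne (h.symm.trans hv))]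
  · rw [Set.inter_insert_of_notMem hinc]
    have hv1 : v ≠ p s := by
      intro h; subst h
      exact hinc ⟨(SimpleGraph.mem_edgeSet _).2 hadj, by simp⟩
    have hv2 : v ≠ p (s + 1) := by
      intro h; subst h
      exact hinc ⟨(SimpleGraph.mem_edgeSet _).2 hadj, by simp⟩
    rw [if_neg hv1, if_neg hv2]
    omega

lemma D_of_simple {p : ℕ → V} {s : ℕ} (hs : Simple G p s) :
    D G p s (p s) = G.degree (p s) := by
  have hsub : G.incidenceSet (p s) ⊆ traversed p s := by
    rintro e ⟨hee, hme⟩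
    obtain ⟨w, rfl⟩ : ∃ w, e = s(p s, w) := Sym2.mem_iff_exists.1 hme
    exact simple_traversed G hs ((SimpleGraph.mem_edgeSet _).1 hee)
  rw [D, Set.inter_eq_self_of_subset_left hsub]
  rw [Set.ncard_eq_toFinset_card', Set.toFinset_card]
  exact G.card_incidenceSet_eq_degree (p s)

lemma trail_parity {p : ℕ → V} (hp : Gd G p) {a b : ℕ} (hab : a ≤ b) (v : V) :
    (∀ u, a ≤ u → u < b → ¬ Simple G p u) →
    Even (D G p b v + D G p a v +
      ((if v = p a then 1 else 0) + (if v = p b then 1 else 0))) := by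
  induction b, hab using Nat.le_induction with
  | base =>
    intro _
    exact ⟨D G p a v + (if v = p a then 1 else 0), by ring⟩
  | succ n hn ih =>
    intro hg
    have hgr : ¬ Simple G p n := hg n hn (by omega)
    have ih' := ih (fun u h1 h2 => hg u h1 (by omega))
    rw [D_succ_greedy G hp hgr]
    have hne : p n ≠ p (n + 1) := (hp.1 n).ne
    rw [Nat.even_iff] at ih' ⊢
    split_ifs at ih' ⊢ <;>
      first
        | omega
        | exact absurd (‹v = p n›.symm.trans ‹v = p (n + 1)›) hne

lemma segment {p : ℕ → V} (hp : Gd G p) (heven : ∀ v : V, Even (G.degree v))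
    {a b : ℕ} (hab : a ≤ b) (hg : ∀ u, a ≤ u → u < b → ¬ Simple G p u)
    (hsb : Simple G p b) (hDa : ∀ v, Even (D G p a v)) :
    p b = p a ∧ ∀ v, Even (D G p b v) := by
  have hclosed : p b = p a := by
    by_contra hne
    have h1 := trail_parity G hp hab (p b) hg
    rw [D_of_simple G hsb, if_neg hne, if_pos rfl] at h1
    have h2 := hDa (p b)
    have h3 := heven (p b)
    rw [Nat.even_iff] at h1 h2 h3
    omega
  refine ⟨hclosed, fun v => ?_⟩
  have h1 := trail_parity G hp hab v hg
  rw [hclosed] at h1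
  have h2 := hDa v
  rw [Nat.even_iff] at h1 h2 ⊢
  split_ifs at h1 <;> omega

lemma invariant {p : ℕ → V} (hp : Gd G p) (heven : ∀ v : V, Even (G.degree v)) :
    ∀ k, ∀ v, Even (D G p (Nat.nth (Simple G p) k) v) := by
  intro k
  induction k with
  | zero =>
    exact (segment G hp heven (Nat.zero_le _)
      (fun u _ h2 => not_simple_before G h2) (simple_nth G hp 0)
      (fun v => by rw [D_zero]; exact Even.zero)).2
  | succ n ih =>
    have hD : ∀ v, Even (D G p (Nat.nth (Simple G p) n + 1) v) := fun v => by
      rw [D, traversed_succ_simple G hp (simple_nth G hp n)]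
      exact ih v
    have hlt : Nat.nth (Simple G p) n < Nat.nth (Simple G p) (n + 1) :=
      Nat.nth_strictMono (simple_infinite G hp) (by omega)
    exact (segment G hp heven hlt
      (fun u h1 h2 => not_simple_between G hp (by omega) h2)
      (simple_nth G hp (n + 1)) hD).2

lemma step_eq {p : ℕ → V} (hp : Gd G p) (heven : ∀ v : V, Even (G.degree v)) (k : ℕ) :
    p (Nat.nth (Simple G p) (k + 1)) = p (Nat.nth (Simple G p) k + 1) := by
  have hD : ∀ v, Even (D G p (Nat.nth (Simple G p) k + 1) v) := fun v => by
    rw [D, traversed_succ_simple G hp (simple_nth G hp k)]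
    exact invariant G hp heven k v
  have hlt : Nat.nth (Simple G p) k < Nat.nth (Simple G p) (k + 1) :=
    Nat.nth_strictMono (simple_infinite G hp) (by omega)
  exact (segment G hp heven hlt
    (fun u h1 h2 => not_simple_between G hp (by omega) h2)
    (simple_nth G hp (k + 1)) hD).1

lemma cover {p : ℕ → V} (hp : Gd G p) {k : ℕ}
    (h : ∀ v : V, ∃ i ≤ k, p (Nat.nth (Simple G p) i) = v) :
    G.edgeSet ⊆ traversed p (Nat.nth (Simple G p) k) := by
  intro e he
  induction e using Sym2.ind with
  | _ a b =>
    rw [SimpleGraph.mem_edgeSet] at he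
    obtain ⟨i, hik, hia⟩ := h a
    have hmem : s(a, b) ∈ traversed p (Nat.nth (Simple G p) i) := by
      rw [← hia]
      exact simple_traversed G (simple_nth G hp i) (by rw [hia]; exact he)
    exact traversed_mono p
      ((Nat.nth_strictMono (simple_infinite G hp)).monotone hik) hmem

/-- `L` is the `k`-th simple time. -/
def STime (p : ℕ → V) (k L : ℕ) : Prop :=
  Simple G p L ∧ Nat.count (Simple G p) L = k

lemma sTime_nth {p : ℕ → V} (hp : Gd G p) (k : ℕ) :
    STime G p k (Nat.nth (Simple G p) k) :=
  ⟨simple_nth G hp k, count_nth' G hp k⟩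

lemma sTime_unique {p : ℕ → V} {k L : ℕ} (h : STime G p k L) :
    Nat.nth (Simple G p) k = L := by
  have := Nat.nth_count h.1
  rw [h.2] at this
  exact this

lemma sTime_congr {p q : ℕ → V} {k s t : ℕ} (hst : s ≤ t) (h : ∀ i ≤ t, p i = q i) :
    STime G p k s ↔ STime G q k s := by
  rw [STime, STime, simple_congr G hst h, count_congr G hst h]

end Comb

section Meas

variable (G : SimpleGraph V) [DecidableRel G.Adj] {Ω : Type*} [MeasurableSpace Ω] (X : ℕ → Ω → V)

def path (ω : Ω) : ℕ → V := fun s => X s ω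

def GoodSet : Set Ω := {ω | Gd G (path X ω)}

noncomputable def tau (k : ℕ) (ω : Ω) : ℕ := sInf {L | STime G (path X ω) k L}

noncomputable def Yp (k : ℕ) (ω : Ω) : V := X (tau G X k ω) ω

lemma tau_good {ω : Ω} (hg : ω ∈ GoodSet G X) (k : ℕ) :
    tau G X k ω = Nat.nth (Simple G (path X ω)) k := by
  have h1 : {L | STime G (path X ω) k L} = {Nat.nth (Simple G (path X ω)) k} := by
    ext L
    simp only [Set.mem_setOf_eq, Set.mem_singleton_iff]
    constructor
    · intro h; exact (sTime_unique G h).symm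
    · rintro rfl; exact sTime_nth G hg k
  rw [tau, h1, csInf_singleton]

lemma measX (hX1 : ∀ t, @Measurable Ω V _ ⊤ (X t)) (t : ℕ) (S : Set V) :
    MeasurableSet {ω | X t ω ∈ S} := hX1 t MeasurableSpace.measurableSet_top

lemma measurable_prefixEvent (hX1 : ∀ t, @Measurable Ω V _ ⊤ (X t)) (t : ℕ) (x : ℕ → V) :
    MeasurableSet (prefixEvent X t x) := by
  have h : prefixEvent X t x = ⋂ i ∈ Set.Iic t, {ω | X i ω ∈ ({x i} : Set V)} := by
    ext ω
    simp [prefixEvent, Set.mem_iInter]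
  rw [h]
  exact MeasurableSet.biInter (Set.to_countable _) fun i _ => measX X hX1 i _

variable [Nonempty V]

noncomputable def extend (L : ℕ) (f : Fin (L + 1) → V) : ℕ → V :=
  fun s => if h : s < L + 1 then f ⟨s, h⟩ else Classical.arbitrary V

lemma extend_eq {L : ℕ} (f : Fin (L + 1) → V) {i : ℕ} (hi : i ≤ L) :
    extend L f i = f ⟨i, by omega⟩ := by
  rw [extend, dif_pos (by omega : i < L + 1)]

lemma measurable_det (hX1 : ∀ t, @Measurable Ω V _ ⊤ (X t)) (L : ℕ) (Q : (ℕ → V) → Prop)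
    (hQ : ∀ p q : ℕ → V, (∀ i ≤ L, p i = q i) → Q p → Q q) :
    MeasurableSet {ω | Q (path X ω)} := by
  have h : {ω | Q (path X ω)} =
      ⋃ f ∈ {f : Fin (L + 1) → V | Q (extend L f)}, prefixEvent X L (extend L f) := by
    ext ω
    simp only [Set.mem_setOf_eq, Set.mem_iUnion, exists_prop]
    constructor
    · intro hω
      refine ⟨fun i => path X ω i.val, ?_, ?_⟩
      · exact hQ _ _ (fun i hi => by rw [extend_eq _ hi]) hω
      · intro i hi
        rw [extend_eq _ hi]
        rfl
    · rintro ⟨f, hf, hpre⟩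
      exact hQ _ _ (fun i hi => (hpre i hi).symm) hf
  rw [h]
  exact MeasurableSet.biUnion (Set.to_countable _)
    fun f _ => measurable_prefixEvent X hX1 L _

lemma measurable_good (hX1 : ∀ t, @Measurable Ω V _ ⊤ (X t)) :
    MeasurableSet (GoodSet G X) := by
  have h : GoodSet G X = ⋂ s : ℕ, {ω | (fun p : ℕ → V => G.Adj (p s) (p (s + 1)) ∧
      ((freshNbrs G p s (p s)).Nonempty → p (s + 1) ∈ freshNbrs G p s (p s))) (path X ω)} := by
    ext ω
    simp only [GoodSet, Set.mem_setOf_eq, Set.mem_iInter, Gd]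
    constructor
    · rintro ⟨h1, h2⟩ s; exact ⟨h1 s, h2 s⟩
    · intro h; exact ⟨fun s => (h s).1, fun s => (h s).2⟩
  rw [h]
  refine MeasurableSet.iInter fun s => measurable_det X hX1 (s + 1)
    (fun p : ℕ → V => G.Adj (p s) (p (s + 1)) ∧
      ((freshNbrs G p s (p s)).Nonempty → p (s + 1) ∈ freshNbrs G p s (p s))) ?_
  rintro p q hpq ⟨h1, h2⟩
  have hf : freshNbrs G p s (p s) = freshNbrs G q s (q s) :=
    fresh_congr G (by omega) hpq
  constructor
  · rw [← hpq s (by omega), ← hpq (s + 1) (by omega)]; exact h1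
  · rw [← hf, ← hpq (s + 1) (by omega)]; exact h2

lemma measurable_sTime (hX1 : ∀ t, @Measurable Ω V _ ⊤ (X t)) (k L : ℕ) :
    MeasurableSet {ω | STime G (path X ω) k L} :=
  measurable_det X hX1 L (fun p => STime G p k L) (fun p q h hS => (sTime_congr G le_rfl h).1 hS)

lemma tau_eq_iff (k L : ℕ) (ω : Ω) :
    tau G X k ω = L ↔
      (STime G (path X ω) k L ∧ ∀ l < L, ¬ STime G (path X ω) k l) ∨
      (L = 0 ∧ ∀ l, ¬ STime G (path X ω) k l) := by
  have htau : tau G X k ω = sInf {L | STime G (path X ω) k L} := rfl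
  set S := {L | STime G (path X ω) k L} with hS
  constructor
  · intro h
    by_cases hSn : S.Nonempty
    · left
      have h1 : sInf S ∈ S := Nat.sInf_mem hSn
      rw [htau] at h
      refine ⟨h ▸ h1, fun l hl hmem => ?_⟩
      have h2 : sInf S ≤ l := Nat.sInf_le hmem
      omega
    · right
      have hSe : S = ∅ := Set.not_nonempty_iff_eq_empty.1 hSn
      rw [htau, hSe, Nat.sInf_empty] at h
      exact ⟨h.symm, fun l hmem => hSn ⟨l, hmem⟩⟩
  · rintro (⟨h1, h2⟩ | ⟨rfl, h⟩)
    · have hLS : L ∈ S := h1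
      rw [htau]
      refine le_antisymm (Nat.sInf_le hLS) ?_
      by_contra hc
      push_neg at hc
      exact h2 _ hc (Nat.sInf_mem ⟨L, hLS⟩)
    · have hSe : S = ∅ := Set.eq_empty_iff_forall_notMem.2 h
      rw [htau, hSe, Nat.sInf_empty]

lemma measurable_tau_eq (hX1 : ∀ t, @Measurable Ω V _ ⊤ (X t)) (k L : ℕ) :
    MeasurableSet {ω | tau G X k ω = L} := by
  have h : {ω | tau G X k ω = L} =
      (({ω | STime G (path X ω) k L} ∩
        ⋂ l ∈ Set.Iio L, {ω | STime G (path X ω) k l}ᶜ) ∪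
       {ω | L = 0 ∧ ∀ l, ¬ STime G (path X ω) k l}) := by
    ext ω
    rw [Set.mem_setOf_eq, tau_eq_iff]
    simp only [Set.mem_union, Set.mem_inter_iff, Set.mem_iInter, Set.mem_compl_iff,
      Set.mem_setOf_eq, Set.mem_Iio]
  rw [h]
  refine MeasurableSet.union
    ((measurable_sTime G X hX1 k L).inter
      (MeasurableSet.biInter (Set.to_countable _)
        fun l _ => (measurable_sTime G X hX1 k l).compl)) ?_
  by_cases hL : L = 0
  · have : {ω : Ω | L = 0 ∧ ∀ l, ¬ STime G (path X ω) k l} =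
        ⋂ l, {ω | STime G (path X ω) k l}ᶜ := by
      ext ω
      simp [hL]
    rw [this]
    exact MeasurableSet.iInter fun l => (measurable_sTime G X hX1 k l).compl
  · have : {ω : Ω | L = 0 ∧ ∀ l, ¬ STime G (path X ω) k l} = ∅ := by
      ext ω; simp [hL]
    rw [this]
    exact MeasurableSet.empty

lemma measurable_Yp (hX1 : ∀ t, @Measurable Ω V _ ⊤ (X t)) (k : ℕ) (S : Set V) :
    MeasurableSet {ω | Yp G X k ω ∈ S} := by
  have h : {ω | Yp G X k ω ∈ S} =
      ⋃ L, ({ω | tau G X k ω = L} ∩ {ω | X L ω ∈ S}) := by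
    ext ω
    simp only [Set.mem_setOf_eq, Set.mem_iUnion, Set.mem_inter_iff]
    constructor
    · intro hω; exact ⟨tau G X k ω, rfl, hω⟩
    · rintro ⟨L, hL, hX⟩
      rw [Yp, hL]
      exact hX
  rw [h]
  exact MeasurableSet.iUnion fun L =>
    (measurable_tau_eq G X hX1 k L).inter (measX X hX1 L S)

lemma cond_null (μ : Measure Ω) [IsProbabilityMeasure μ] {B A : Set Ω}
    (hB : MeasurableSet B) (hA : MeasurableSet A) (h0 : μ B ≠ 0) (h1 : μ[|B] A = 1) :
    μ (B \ A) = 0 := by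
  rw [ProbabilityTheory.cond_apply hB] at h1
  have hfin : μ B ≠ ⊤ := measure_ne_top μ B
  have h2 : μ (B ∩ A) = μ B := by
    have h3 : μ B * ((μ B)⁻¹ * μ (B ∩ A)) = μ B * 1 := by rw [h1]
    rwa [← mul_assoc, ENNReal.mul_inv_cancel h0 hfin, one_mul, mul_one] at h3
  have h4 : μ (B ∩ A) + μ (B \ A) = μ B := measure_inter_add_diff B hA
  rw [h2] at h4
  exact (ENNReal.add_right_inj hfin).1 (by rw [h4, add_zero])

lemma good_null (μ : Measure Ω) [IsProbabilityMeasure μ] (hXf : IsGRW G μ X) :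
    μ (GoodSet G X)ᶜ = 0 := by
  have hX1 := hXf.1
  have hsub : (GoodSet G X)ᶜ ⊆
      ⋃ s : ℕ, ({ω | ¬ G.Adj (X s ω) (X (s + 1) ω)} ∪
        {ω | (freshNbrs G (path X ω) s (path X ω s)).Nonempty ∧
          X (s + 1) ω ∉ freshNbrs G (path X ω) s (path X ω s)}) := by
    intro ω hω
    simp only [GoodSet, Set.mem_compl_iff, Set.mem_setOf_eq, Gd, not_and_or] at hω
    rcases hω with hω | hω
    · push_neg at hω
      obtain ⟨s, hs⟩ := hω
      exact Set.mem_iUnion.2 ⟨s, Or.inl hs⟩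
    · push_neg at hω
      obtain ⟨s, hs1, hs2⟩ := hω
      exact Set.mem_iUnion.2 ⟨s, Or.inr ⟨hs1, hs2⟩⟩
  refine measure_mono_null hsub (measure_iUnion_null fun s => measure_union_null ?_ ?_)
  · -- adjacency failures are null
    have hsub2 : {ω | ¬ G.Adj (X s ω) (X (s + 1) ω)} ⊆
        ⋃ f : Fin (s + 1) → V,
          (prefixEvent X s (extend s f) ∩ {ω | ¬ G.Adj (X s ω) (X (s + 1) ω)}) := by
      intro ω hω
      refine Set.mem_iUnion.2 ⟨fun i => X i.val ω, ?_, hω⟩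
      intro i hi
      rw [extend_eq _ hi]
    refine measure_mono_null hsub2 (measure_iUnion_null fun f => ?_)
    by_cases h0 : μ (prefixEvent X s (extend s f)) = 0
    · exact measure_mono_null Set.inter_subset_left h0
    · set q := extend s f with hq
      have h3 := (hXf.2 s q h0).2.2
      have hnull := cond_null μ (measurable_prefixEvent X hX1 s q)
        (measX X hX1 (s + 1) {w | G.Adj (q s) w} :
          MeasurableSet {ω | G.Adj (q s) (X (s + 1) ω)}) h0 h3
      refine measure_mono_null ?_ hnull
      rintro ω ⟨hpre, hbad⟩
      refine ⟨hpre, fun hadj => ?_⟩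
      rw [Set.mem_setOf_eq, ← hpre s le_rfl] at hadj
      exact hbad hadj
  · -- greedy failures are null
    have hsub2 : {ω | (freshNbrs G (path X ω) s (path X ω s)).Nonempty ∧
          X (s + 1) ω ∉ freshNbrs G (path X ω) s (path X ω s)} ⊆
        ⋃ f : Fin (s + 1) → V,
          (prefixEvent X s (extend s f) ∩
            {ω | (freshNbrs G (path X ω) s (path X ω s)).Nonempty ∧
              X (s + 1) ω ∉ freshNbrs G (path X ω) s (path X ω s)}) := by
      intro ω hω
      refine Set.mem_iUnion.2 ⟨fun i => X i.val ω, ?_, hω⟩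
      intro i hi
      rw [extend_eq _ hi]
    refine measure_mono_null hsub2 (measure_iUnion_null fun f => ?_)
    by_cases h0 : μ (prefixEvent X s (extend s f)) = 0
    · exact measure_mono_null Set.inter_subset_left h0
    · set q := extend s f with hq
      have hfr : ∀ ω ∈ prefixEvent X s q,
          freshNbrs G (path X ω) s (path X ω s) = freshNbrs G q s (q s) := by
        intro ω hpre
        exact fresh_congr G le_rfl (fun i hi => hpre i hi)
      by_cases hne : (freshNbrs G q s (q s)).Nonempty
      · have h3 := (hXf.2 s q h0).1 hne
        have hnull := cond_null μ (measurable_prefixEvent X hX1 s q)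
          (measX X hX1 (s + 1) (freshNbrs G q s (q s)) :
            MeasurableSet {ω | X (s + 1) ω ∈ freshNbrs G q s (q s)}) h0 h3
        refine measure_mono_null ?_ hnull
        rintro ω ⟨hpre, -, hbad⟩
        refine ⟨hpre, fun hmem => ?_⟩
        rw [Set.mem_setOf_eq, ← hfr ω hpre] at hmem
        exact hbad hmem
      · refine measure_mono_null ?_ (measure_empty (μ := μ))
        rintro ω ⟨hpre, hne2, -⟩
        rw [hfr ω hpre] at hne2
        exact absurd hne2 hne

lemma meas_inter_good (μ : Measure Ω) (hnull : μ (GoodSet G X)ᶜ = 0) (S : Set Ω) :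
    μ (S ∩ GoodSet G X) = μ S := by
  refine le_antisymm (measure_mono Set.inter_subset_left) ?_
  calc μ S ≤ μ (S ∩ GoodSet G X) + μ (S \ GoodSet G X) := measure_le_inter_add_diff μ S _
    _ ≤ μ (S ∩ GoodSet G X) + μ (GoodSet G X)ᶜ := by
        gcongr
        exact fun ω hω => hω.2
    _ = μ (S ∩ GoodSet G X) := by rw [hnull, add_zero]


section Core

variable (μ : Measure Ω) [IsProbabilityMeasure μ]

/-- Compatibility of a finite path with the data `(t, x)` of SRW prefix values. -/
def pOK (t : ℕ) (x : ℕ → V) (j : Σ L : ℕ, Fin (L + 1) → V) : Prop :=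
  STime G (extend j.1 j.2) t j.1 ∧
    ∀ i ≤ t, ∃ s ≤ j.1, STime G (extend j.1 j.2) i s ∧ extend j.1 j.2 s = x i

def Aset (t : ℕ) (x : ℕ → V) (j : Σ L : ℕ, Fin (L + 1) → V) : Set Ω :=
  {ω | pOK G t x j ∧ ω ∈ prefixEvent X j.1 (extend j.1 j.2)}

lemma Aset_eq_of_pOK {t : ℕ} {x : ℕ → V} {j : Σ L : ℕ, Fin (L + 1) → V}
    (h : pOK G t x j) : Aset G X t x j = prefixEvent X j.1 (extend j.1 j.2) := by
  ext ω; simp [Aset, h]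

lemma Aset_eq_of_not_pOK {t : ℕ} {x : ℕ → V} {j : Σ L : ℕ, Fin (L + 1) → V}
    (h : ¬ pOK G t x j) : Aset G X t x j = ∅ := by
  ext ω; simp [Aset, h]

lemma measurable_Aset (hX1 : ∀ t, @Measurable Ω V _ ⊤ (X t)) (t : ℕ) (x : ℕ → V)
    (j : Σ L : ℕ, Fin (L + 1) → V) : MeasurableSet (Aset G X t x j) := by
  by_cases h : pOK G t x j
  · rw [Aset_eq_of_pOK G X h]
    exact measurable_prefixEvent X hX1 _ _
  · rw [Aset_eq_of_not_pOK G X h]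
    exact MeasurableSet.empty

lemma pOK_last {t : ℕ} {x : ℕ → V} {j : Σ L : ℕ, Fin (L + 1) → V}
    (hj : pOK G t x j) : extend j.1 j.2 j.1 = x t := by
  obtain ⟨L, f⟩ := j
  dsimp only at hj ⊢
  obtain ⟨s, hsL, hS, hval⟩ := hj.2 t le_rfl
  have e1 := sTime_unique G hS
  have e2 := sTime_unique G hj.1
  have e3 : s = L := by rw [e1] at e2; exact e2
  subst e3
  exact hval

lemma Aset_disj (t : ℕ) (x : ℕ → V) :
    Pairwise (Function.onFun Disjoint (Aset G X t x)) := by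
  intro j j' hne
  rw [Function.onFun, Set.disjoint_left]
  rintro ω ⟨hOK, hpre⟩ ⟨hOK', hpre'⟩
  apply hne
  obtain ⟨L, f⟩ := j
  obtain ⟨L', f'⟩ := j'
  dsimp only at hOK hpre hOK' hpre' ⊢
  rcases lt_trichotomy L L' with h | h | h
  · exfalso
    have hagree : ∀ i ≤ L, extend L f i = extend L' f' i := fun i hi => by
      rw [← hpre i hi, hpre' i (by omega)]
    have hS1 : STime G (extend L' f') t L := (sTime_congr G le_rfl hagree).1 hOK.1
    have e1 := sTime_unique G hS1
    have e2 : Nat.nth (Simple G (extend L' f')) t = L' := sTime_unique G hOK'.1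
    omega
  · subst h
    have hf : f = f' := by
      funext i
      have h1 : X i.val ω = extend L f i.val := hpre i.val (Nat.lt_succ_iff.1 i.isLt)
      have h2 : X i.val ω = extend L f' i.val := hpre' i.val (Nat.lt_succ_iff.1 i.isLt)
      rw [extend_eq _ (Nat.lt_succ_iff.1 i.isLt)] at h1 h2
      simp only [Fin.eta] at h1 h2
      rw [← h1, h2]
    rw [hf]
  · exfalso
    have hagree : ∀ i ≤ L', extend L' f' i = extend L f i := fun i hi => by
      rw [← hpre' i hi, hpre i (by omega)]
    have hS1 : STime G (extend L f) t L' := (sTime_congr G le_rfl hagree).1 hOK'.1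
    have e1 := sTime_unique G hS1
    have e2 : Nat.nth (Simple G (extend L f)) t = L := sTime_unique G hOK.1
    omega

lemma mem_iUnion_Aset {t : ℕ} {x : ℕ → V} {ω : Ω}
    (hP : ∀ i ≤ t, Yp G X i ω = x i) (hg : ω ∈ GoodSet G X) :
    ω ∈ ⋃ j, Aset G X t x j := by
  have hGd : Gd G (path X ω) := hg
  have htg := tau_good G X hg
  set p := path X ω with hp
  set L := tau G X t ω with hLdef
  have hagree : ∀ i ≤ L, p i = extend L (fun i : Fin (L + 1) => p i.val) i :=
    fun i hi => by rw [extend_eq _ hi]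
  have h1 : STime G p t L := by
    rw [hLdef, htg t]
    exact sTime_nth G hGd t
  refine Set.mem_iUnion.2 ⟨⟨L, fun i : Fin (L + 1) => p i.val⟩, ⟨?_, ?_⟩, ?_⟩
  · exact (sTime_congr G le_rfl hagree).1 h1
  · intro i hi
    refine ⟨tau G X i ω, ?_, ?_, ?_⟩
    · rw [hLdef, htg t, htg i]
      exact (Nat.nth_strictMono (simple_infinite G hGd)).monotone hi
    · have h2 : STime G p i (tau G X i ω) := by
        rw [htg i]; exact sTime_nth G hGd i
      have hle : tau G X i ω ≤ L := by
        rw [hLdef, htg t, htg i]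
        exact (Nat.nth_strictMono (simple_infinite G hGd)).monotone hi
      exact (sTime_congr G hle hagree).1 h2
    · have hle : tau G X i ω ≤ L := by
        rw [hLdef, htg t, htg i]
        exact (Nat.nth_strictMono (simple_infinite G hGd)).monotone hi
      rw [← hagree _ hle]
      exact hP i hi
  · intro i hi
    exact hagree i hi

lemma Aset_good_spec (heven : ∀ v : V, Even (G.degree v))
    {t : ℕ} {x : ℕ → V} {j : Σ L : ℕ, Fin (L + 1) → V} {ω : Ω}
    (hA : ω ∈ Aset G X t x j) (hg : ω ∈ GoodSet G X) :
    (∀ i ≤ t, Yp G X i ω = x i) ∧ Yp G X (t + 1) ω = X (j.1 + 1) ω := by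
  obtain ⟨hOK, hpre⟩ := hA
  obtain ⟨L, f⟩ := j
  dsimp only at hOK hpre ⊢
  have hGd : Gd G (path X ω) := hg
  have htg := tau_good G X hg
  set p := path X ω with hp
  have hagree : ∀ i ≤ L, p i = extend L f i := hpre
  have h1 : STime G p t L := (sTime_congr G le_rfl hagree).2 hOK.1
  have htauL : tau G X t ω = L := by rw [htg t, sTime_unique G h1]
  refine ⟨?_, ?_⟩
  · intro i hi
    obtain ⟨s, hsL, hS, hval⟩ := hOK.2 i hi
    have h2 : STime G p i s := (sTime_congr G hsL hagree).2 hS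
    have h3 : tau G X i ω = s := by rw [htg i, sTime_unique G h2]
    rw [Yp, h3]
    calc X s ω = extend L f s := hagree s hsL
      _ = x i := hval
  · rw [Yp, htg (t + 1)]
    have hnt : Nat.nth (Simple G p) t = L := by rw [← htg t, htauL]
    calc X (Nat.nth (Simple G p) (t + 1)) ω
        = p (Nat.nth (Simple G p) (t + 1)) := rfl
      _ = p (Nat.nth (Simple G p) t + 1) := step_eq G hGd heven t
      _ = X (L + 1) ω := by rw [hnt]; rfl

lemma srw_core (heven : ∀ v : V, Even (G.degree v)) (hXf : IsGRW G μ X)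
    (t : ℕ) (x : ℕ → V)
    (hP0 : μ {ω | ∀ i ≤ t, Yp G X i ω = x i} ≠ 0) :
    0 < G.degree (x t) ∧
    ∀ w : V, G.Adj (x t) w →
      μ ({ω | ∀ i ≤ t, Yp G X i ω = x i} ∩ {ω | Yp G X (t + 1) ω = w}) =
        (G.degree (x t) : ℝ≥0∞)⁻¹ * μ {ω | ∀ i ≤ t, Yp G X i ω = x i} := by
  have hX1 := hXf.1
  have hnull := good_null G X μ hXf
  set P : Set Ω := {ω | ∀ i ≤ t, Yp G X i ω = x i} with hPdef
  have hUG : (⋃ j, Aset G X t x j) ∩ GoodSet G X = P ∩ GoodSet G X := by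
    ext ω
    constructor
    · rintro ⟨hU, hg⟩
      obtain ⟨j, hj⟩ := Set.mem_iUnion.1 hU
      exact ⟨(Aset_good_spec G X heven hj hg).1, hg⟩
    · rintro ⟨hPω, hg⟩
      exact ⟨mem_iUnion_Aset G X hPω hg, hg⟩
  have hdeg : 0 < G.degree (x t) := by
    have hPG : μ (P ∩ GoodSet G X) ≠ 0 := by
      rw [meas_inter_good G X μ hnull]; exact hP0
    have hne : (P ∩ GoodSet G X).Nonempty := by
      rw [Set.nonempty_iff_ne_empty]
      intro h
      rw [h, measure_empty] at hPG
      exact hPG rfl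
    obtain ⟨ω, hPω, hg⟩ := hne
    have hGd : Gd G (path X ω) := hg
    rw [SimpleGraph.degree_pos_iff_exists_adj]
    have h1 : x t = path X ω (Nat.nth (Simple G (path X ω)) t) := by
      rw [← hPω t le_rfl, Yp, tau_good G X hg t]
      rfl
    exact ⟨_, by rw [h1]; exact hGd.1 _⟩
  refine ⟨hdeg, fun w hw => ?_⟩
  have hdisj := Aset_disj G X t x
  have hAmeas := measurable_Aset G X hX1 t x
  have hper : ∀ j : Σ L : ℕ, Fin (L + 1) → V,
      μ (Aset G X t x j ∩ {ω | X (j.1 + 1) ω = w}) =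
        (G.degree (x t) : ℝ≥0∞)⁻¹ * μ (Aset G X t x j) := by
    intro j
    by_cases hOK : pOK G t x j
    · by_cases h0 : μ (Aset G X t x j) = 0
      · rw [h0, mul_zero]
        exact measure_mono_null Set.inter_subset_left h0
      · rw [Aset_eq_of_pOK G X hOK] at h0 ⊢
        have hgrw := (hXf.2 j.1 (extend j.1 j.2) h0).2.1
        have hfresh : freshNbrs G (extend j.1 j.2) j.1 (extend j.1 j.2 j.1) = ∅ :=
          hOK.1.1
        have hlast : extend j.1 j.2 j.1 = x t := pOK_last G hOK
        have hc := hgrw hfresh w (by rw [hlast]; exact hw)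
        rw [hlast] at hc
        rw [ProbabilityTheory.cond_apply (measurable_prefixEvent X hX1 _ _)] at hc
        have hfin : μ (prefixEvent X j.1 (extend j.1 j.2)) ≠ ⊤ := measure_ne_top _ _
        calc μ (prefixEvent X j.1 (extend j.1 j.2) ∩ {ω | X (j.1 + 1) ω = w})
            = μ (prefixEvent X j.1 (extend j.1 j.2)) *
              ((μ (prefixEvent X j.1 (extend j.1 j.2)))⁻¹ *
                μ (prefixEvent X j.1 (extend j.1 j.2) ∩ {ω | X (j.1 + 1) ω = w})) := by
              rw [← mul_assoc, ENNReal.mul_inv_cancel h0 hfin, one_mul]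
          _ = μ (prefixEvent X j.1 (extend j.1 j.2)) * (G.degree (x t) : ℝ≥0∞)⁻¹ := by
              rw [hc]
          _ = (G.degree (x t) : ℝ≥0∞)⁻¹ * μ (prefixEvent X j.1 (extend j.1 j.2)) :=
              mul_comm _ _
    · rw [Aset_eq_of_not_pOK G X hOK, Set.empty_inter, measure_empty, mul_zero]
  set W : Set Ω := {ω | Yp G X (t + 1) ω = w} with hWdef
  have hsum1 : μ (P ∩ W) = ∑' j : Σ L : ℕ, Fin (L + 1) → V,
      μ (Aset G X t x j ∩ {ω | X (j.1 + 1) ω = w}) := by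
    have e2 : P ∩ W ∩ GoodSet G X =
        (⋃ j, (Aset G X t x j ∩ {ω | X (j.1 + 1) ω = w})) ∩ GoodSet G X := by
      ext ω
      constructor
      · rintro ⟨⟨hPω, hW⟩, hg⟩
        have hU := mem_iUnion_Aset G X hPω hg
        obtain ⟨j, hj⟩ := Set.mem_iUnion.1 hU
        have h3 := Aset_good_spec G X heven hj hg
        refine ⟨Set.mem_iUnion.2 ⟨j, hj, ?_⟩, hg⟩
        rw [Set.mem_setOf_eq, ← h3.2]
        exact hW
      · rintro ⟨hU, hg⟩
        obtain ⟨j, hjA, hjX⟩ := Set.mem_iUnion.1 hU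
        have h3 := Aset_good_spec G X heven hjA hg
        exact ⟨⟨h3.1, h3.2.trans hjX⟩, hg⟩
    have hdisj2 : Pairwise (Function.onFun Disjoint fun j : Σ L : ℕ, Fin (L + 1) → V =>
        Aset G X t x j ∩ {ω | X (j.1 + 1) ω = w}) :=
      fun a b hab => Disjoint.mono Set.inter_subset_left Set.inter_subset_left (hdisj hab)
    have hmeas2 : ∀ j : Σ L : ℕ, Fin (L + 1) → V,
        MeasurableSet (Aset G X t x j ∩ {ω | X (j.1 + 1) ω = w}) := fun j =>
      (hAmeas j).inter (measX X hX1 (j.1 + 1) {w})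
    have e3 := measure_iUnion (μ := μ) hdisj2 hmeas2
    rw [← meas_inter_good G X μ hnull (P ∩ W), e2, meas_inter_good G X μ hnull, e3]
  have hsum2 : μ P = ∑' j : Σ L : ℕ, Fin (L + 1) → V, μ (Aset G X t x j) := by
    rw [← meas_inter_good G X μ hnull P, ← hUG, meas_inter_good G X μ hnull,
      measure_iUnion hdisj hAmeas]
  rw [hsum1, hsum2]
  calc ∑' j : Σ L : ℕ, Fin (L + 1) → V, μ (Aset G X t x j ∩ {ω | X (j.1 + 1) ω = w})
      = ∑' j : Σ L : ℕ, Fin (L + 1) → V,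
          (G.degree (x t) : ℝ≥0∞)⁻¹ * μ (Aset G X t x j) := tsum_congr hper
    _ = (G.degree (x t) : ℝ≥0∞)⁻¹ * ∑' j : Σ L : ℕ, Fin (L + 1) → V,
          μ (Aset G X t x j) := ENNReal.tsum_mul_left

end Core


lemma sInf_image_coe {T : Set ℕ} (h : T.Nonempty) :
    sInf (((↑) : ℕ → ℕ∞) '' T) = ((sInf T : ℕ) : ℕ∞) := by
  refine le_antisymm (sInf_le (Set.mem_image_of_mem _ (Nat.sInf_mem h))) ?_
  refine le_sInf ?_
  rintro b ⟨t, ht, rfl⟩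
  exact_mod_cast Nat.sInf_le ht

lemma pathwise_bound (heven : ∀ v : V, Even (G.degree v)) {ω : Ω}
    (hg : ω ∈ GoodSet G X) :
    edgeCoverTime G X ω ≤ vertexCoverTime (Yp G X) ω + (G.edgeFinset.card : ℕ∞) := by
  have hGd : Gd G (path X ω) := hg
  by_cases hTn : {t : ℕ | ∀ v : V, ∃ s ≤ t, Yp G X s ω = v}.Nonempty
  · set k := sInf {t : ℕ | ∀ v : V, ∃ s ≤ t, Yp G X s ω = v} with hk
    have hkT : ∀ v : V, ∃ s ≤ k, Yp G X s ω = v := Nat.sInf_mem hTn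
    have hvct : vertexCoverTime (Yp G X) ω = (k : ℕ∞) := sInf_image_coe hTn
    have hcov : G.edgeSet ⊆ traversed (path X ω) (Nat.nth (Simple G (path X ω)) k) := by
      apply cover G hGd
      intro v
      obtain ⟨s, hs, hv⟩ := hkT v
      refine ⟨s, hs, ?_⟩
      calc path X ω (Nat.nth (Simple G (path X ω)) s)
          = X (tau G X s ω) ω := by rw [tau_good G X hg s]; rfl
        _ = v := hv
    have hedge : edgeCoverTime G X ω ≤ ((k + G.edgeFinset.card : ℕ) : ℕ∞) := by
      apply sInf_le
      refine ⟨k + G.edgeFinset.card, ?_, rfl⟩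
      exact fun e he =>
        traversed_mono _ (nth_le G hGd k) (hcov he)
    rw [hvct]
    refine hedge.trans ?_
    rw [Nat.cast_add]
  · have hvct : vertexCoverTime (Yp G X) ω = ⊤ := by
      rw [vertexCoverTime, Set.not_nonempty_iff_eq_empty.1 hTn, Set.image_empty,
        sInf_empty]
    rw [hvct, top_add]
    exact le_top

end Meas

lemma measurable_of_countable_range {α β : Type*} [MeasurableSpace α] [MeasurableSpace β]
    {f : α → β} (hr : (Set.range f).Countable)
    (h : ∀ c ∈ Set.range f, MeasurableSet (f ⁻¹' {c})) : Measurable f := by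
  intro S hS
  have heq : f ⁻¹' S = ⋃ c ∈ Set.range f ∩ S, f ⁻¹' {c} := by
    ext a
    simp only [Set.mem_preimage, Set.mem_iUnion, Set.mem_inter_iff, Set.mem_range,
      Set.mem_singleton_iff, exists_prop]
    constructor
    · intro ha; exact ⟨f a, ⟨⟨a, rfl⟩, ha⟩, rfl⟩
    · rintro ⟨c, ⟨-, hc⟩, rfl⟩; exact hc
  rw [heq]
  exact MeasurableSet.biUnion (Set.Countable.mono Set.inter_subset_left hr)
    fun c hc => h c hc.1

lemma measurable_vct {Ω₂ : Type*} [MeasurableSpace Ω₂] (Z : ℕ → Ω₂ → V)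
    (hZ : ∀ (k : ℕ) (S : Set V), MeasurableSet {ω | Z k ω ∈ S}) :
    Measurable (fun ω => ((vertexCoverTime Z ω : ℕ∞) : ℝ≥0∞)) := by
  have hA : ∀ t : ℕ, MeasurableSet {ω : Ω₂ | ∀ v : V, ∃ s ≤ t, Z s ω = v} := by
    intro t
    have heq : {ω : Ω₂ | ∀ v : V, ∃ s ≤ t, Z s ω = v} =
        ⋂ v : V, ⋃ s ∈ Set.Iic t, {ω | Z s ω ∈ ({v} : Set V)} := by
      ext ω
      simp [Set.mem_iInter, Set.mem_iUnion]
    rw [heq]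
    exact MeasurableSet.iInter fun v =>
      MeasurableSet.biUnion (Set.to_countable _) fun s _ => hZ s {v}
  have hvc : ∀ m : ℕ∞, MeasurableSet {ω : Ω₂ | vertexCoverTime Z ω = m} := by
    intro m
    induction m using ENat.recTopCoe with
    | top =>
      have heq : {ω : Ω₂ | vertexCoverTime Z ω = ⊤} =
          ⋂ t : ℕ, {ω : Ω₂ | ∀ v : V, ∃ s ≤ t, Z s ω = v}ᶜ := by
        ext ω
        simp only [Set.mem_setOf_eq, Set.mem_iInter, Set.mem_compl_iff]
        constructor
        · intro h t ht
          have h2 : vertexCoverTime Z ω ≤ (t : ℕ∞) :=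
            sInf_le (Set.mem_image_of_mem _ ht)
          rw [h] at h2
          exact absurd (top_le_iff.1 h2) (by simp)
        · intro h
          have h2 : {t : ℕ | ∀ v : V, ∃ s ≤ t, Z s ω = v} = ∅ :=
            Set.eq_empty_iff_forall_notMem.2 h
          rw [vertexCoverTime, h2, Set.image_empty, sInf_empty]
      rw [heq]
      exact MeasurableSet.iInter fun t => (hA t).compl
    | coe k =>
      have heq : {ω : Ω₂ | vertexCoverTime Z ω = (k : ℕ∞)} =
          {ω : Ω₂ | ∀ v : V, ∃ s ≤ k, Z s ω = v} ∩
            ⋂ j ∈ Set.Iio k, {ω : Ω₂ | ∀ v : V, ∃ s ≤ j, Z s ω = v}ᶜ := by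
        ext ω
        simp only [Set.mem_setOf_eq, Set.mem_inter_iff, Set.mem_iInter,
          Set.mem_compl_iff, Set.mem_Iio]
        constructor
        · intro h
          have hTn : {t : ℕ | ∀ v : V, ∃ s ≤ t, Z s ω = v}.Nonempty := by
            by_contra hc
            rw [vertexCoverTime, Set.not_nonempty_iff_eq_empty.1 hc, Set.image_empty,
              sInf_empty] at h
            exact absurd h (by simp)
          rw [vertexCoverTime, sInf_image_coe hTn] at h
          have hks : sInf {t : ℕ | ∀ v : V, ∃ s ≤ t, Z s ω = v} = k := by
            exact_mod_cast h
          constructor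
          · exact hks ▸ Nat.sInf_mem hTn
          · intro j hj hmem
            have hj2 : j ∈ {t : ℕ | ∀ v : V, ∃ s ≤ t, Z s ω = v} := hmem
            have := Nat.sInf_le hj2
            omega
        · rintro ⟨h1, h2⟩
          have hTn : {t : ℕ | ∀ v : V, ∃ s ≤ t, Z s ω = v}.Nonempty := ⟨k, h1⟩
          rw [vertexCoverTime, sInf_image_coe hTn]
          have hks : sInf {t : ℕ | ∀ v : V, ∃ s ≤ t, Z s ω = v} = k := by
            refine le_antisymm (Nat.sInf_le h1) ?_
            by_contra hc
            push_neg at hc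
            exact h2 _ hc (Nat.sInf_mem hTn)
          rw [hks]
      rw [heq]
      exact (hA k).inter (MeasurableSet.biInter (Set.to_countable _)
        fun j _ => (hA j).compl)
  apply measurable_of_countable_range
  · have hsub : Set.range (fun ω : Ω₂ => ((vertexCoverTime Z ω : ℕ∞) : ℝ≥0∞)) ⊆
        Set.range (fun m : ℕ∞ => (m : ℝ≥0∞)) := by
      rintro c ⟨ω, rfl⟩
      exact ⟨_, rfl⟩
    exact Set.Countable.mono hsub (Set.countable_range _)
  · rintro c ⟨ω₀, rfl⟩
    have heq : (fun ω : Ω₂ => ((vertexCoverTime Z ω : ℕ∞) : ℝ≥0∞)) ⁻¹'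
        {((vertexCoverTime Z ω₀ : ℕ∞) : ℝ≥0∞)} =
        {ω : Ω₂ | vertexCoverTime Z ω = vertexCoverTime Z ω₀} := by
      ext ω
      simp only [Set.mem_preimage, Set.mem_singleton_iff, Set.mem_setOf_eq]
      constructor
      · intro h
        exact le_antisymm (ENat.toENNReal_le.1 h.le) (ENat.toENNReal_le.1 h.ge)
      · intro h; rw [h]
    rw [heq]
    exact hvc _

end GRWAux


/-- if all degrees of a finite graph `G` are even and the expected vertex
cover time of `G` by simple random walk (started anywhere, i.e. for every process
satisfying the SRW conditions) is at most `C`, then for any rule `𝓡` the expected edge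
cover time of `G` by greedy random walk is at most `|E| + C`. -/
theorem grw_stmt18 {V : Type*} [Fintype V] [DecidableEq V] (G : SimpleGraph V)
    [DecidableRel G.Adj] (heven : ∀ v : V, Even (G.degree v)) (C : ℝ) (hC : 0 ≤ C)
    (hcover : ∀ (Ω' : Type) [MeasurableSpace Ω'] (μ' : MeasureTheory.Measure Ω')
      [MeasureTheory.IsProbabilityMeasure μ'] (Y : ℕ → Ω' → V), GRW.IsSRW G μ' Y →
        ∫⁻ ω, ((GRW.vertexCoverTime Y ω : ℕ∞) : ℝ≥0∞) ∂μ' ≤ ENNReal.ofReal C)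
    {Ω : Type*} [MeasurableSpace Ω] (μ : MeasureTheory.Measure Ω)
    [MeasureTheory.IsProbabilityMeasure μ] (X : ℕ → Ω → V)
    (hX : GRW.IsGRW G μ X) :
    ∫⁻ ω, ((GRW.edgeCoverTime G X ω : ℕ∞) : ℝ≥0∞) ∂μ ≤
      (G.edgeFinset.card : ℝ≥0∞) + ENNReal.ofReal C := by
  classical
  rcases isEmpty_or_nonempty V with hVe | hV
  · exfalso
    have hΩ : IsEmpty Ω := ⟨fun ω => hVe.false (X 0 ω)⟩
    have h1 : μ Set.univ = 1 := measure_univ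
    rw [Set.univ_eq_empty_iff.2 hΩ, measure_empty] at h1
    exact zero_ne_one h1
  · have hX1 := hX.1
    have hnull := GRWAux.good_null G X μ hX
    set n := Fintype.card V with hn
    set e : V ≃ Fin n := Fintype.equivFin V with he
    set Φ : Ω → (ℕ → Fin n) := fun ω k => e (GRWAux.Yp G X k ω) with hΦdef
    have hΦ : Measurable Φ := by
      rw [hΦdef]
      apply measurable_pi_lambda
      intro k S hS
      exact GRWAux.measurable_Yp G X hX1 k (e ⁻¹' S)
    set μ' : Measure (ℕ → Fin n) := μ.map Φ with hμ'
    haveI : IsProbabilityMeasure μ' := by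
      rw [hμ']
      exact Measure.isProbabilityMeasure_map hΦ.aemeasurable
    set Yev : ℕ → (ℕ → Fin n) → V := fun k ω' => e.symm (ω' k) with hYevdef
    have hYΦ : ∀ (k : ℕ) (ω : Ω), Yev k (Φ ω) = GRWAux.Yp G X k ω := by
      intro k ω
      simp only [hYevdef, hΦdef, Equiv.symm_apply_apply]
    have hYevMeas : ∀ (k : ℕ) (S : Set V),
        MeasurableSet {ω' : ℕ → Fin n | Yev k ω' ∈ S} := by
      intro k S
      have heqm : {ω' : ℕ → Fin n | Yev k ω' ∈ S} =
          (fun ω' : ℕ → Fin n => ω' k) ⁻¹' (e.symm ⁻¹' S) := by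
        ext ω'
        simp [hYevdef]
      rw [heqm]
      exact measurable_pi_apply k ((e.symm ⁻¹' S).toFinite.measurableSet)
    have hprefmeas : ∀ (t : ℕ) (x : ℕ → V),
        MeasurableSet (GRW.prefixEvent Yev t x) := by
      intro t x
      have heq : GRW.prefixEvent Yev t x =
          ⋂ i ∈ Set.Iic t, {ω' : ℕ → Fin n | Yev i ω' ∈ ({x i} : Set V)} := by
        ext ω'
        simp [GRW.prefixEvent]
      rw [heq]
      exact MeasurableSet.biInter (Set.to_countable _) fun i _ => hYevMeas i _
    have hpull : ∀ (t : ℕ) (x : ℕ → V),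
        Φ ⁻¹' (GRW.prefixEvent Yev t x) =
          {ω | ∀ i ≤ t, GRWAux.Yp G X i ω = x i} := by
      intro t x
      ext ω
      simp only [Set.mem_preimage, GRW.prefixEvent, Set.mem_setOf_eq]
      constructor
      · intro h i hi
        rw [← hYΦ i ω]
        exact h i hi
      · intro h i hi
        rw [hYΦ i ω]
        exact h i hi
    have hsrw : GRW.IsSRW G μ' Yev := by
      refine ⟨fun t S _ => hYevMeas t S, ?_⟩
      intro t x hP0'
      have hmape : ∀ (A : Set (ℕ → Fin n)), MeasurableSet A → μ' A = μ (Φ ⁻¹' A) := by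
        intro A hA
        rw [hμ']
        exact MeasureTheory.Measure.map_apply hΦ hA
      have hPev : μ' (GRW.prefixEvent Yev t x) =
          μ {ω | ∀ i ≤ t, GRWAux.Yp G X i ω = x i} := by
        rw [hmape _ (hprefmeas t x), hpull]
      have hP0 : μ {ω | ∀ i ≤ t, GRWAux.Yp G X i ω = x i} ≠ 0 := by
        rw [← hPev]; exact hP0'
      obtain ⟨hdeg, hkey⟩ := GRWAux.srw_core G X μ heven hX t x hP0
      have hdegne : (G.degree (x t) : ℝ≥0∞) ≠ 0 := by
        exact_mod_cast hdeg.ne'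
      have hPfin : μ {ω | ∀ i ≤ t, GRWAux.Yp G X i ω = x i} ≠ ⊤ := measure_ne_top _ _
      constructor
      · intro w hw
        rw [ProbabilityTheory.cond_apply (hprefmeas t x)]
        have hevmeas : MeasurableSet {ω' : ℕ → Fin n | Yev (t + 1) ω' = w} :=
          hYevMeas (t + 1) {w}
        rw [hmape _ ((hprefmeas t x).inter hevmeas)]
        have hpre2 : Φ ⁻¹' (GRW.prefixEvent Yev t x ∩ {ω' | Yev (t + 1) ω' = w}) =
            {ω | ∀ i ≤ t, GRWAux.Yp G X i ω = x i} ∩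
              {ω | GRWAux.Yp G X (t + 1) ω = w} := by
          rw [Set.preimage_inter, hpull]
          congr 1
          ext ω
          simp only [Set.mem_preimage, Set.mem_setOf_eq, hYΦ]
        rw [hpre2, hkey w hw, hPev, ← mul_assoc,
          mul_comm (μ {ω | ∀ i ≤ t, GRWAux.Yp G X i ω = x i})⁻¹
            ((G.degree (x t) : ℝ≥0∞))⁻¹,
          mul_assoc, ENNReal.inv_mul_cancel hP0 hPfin, mul_one]
      · rw [ProbabilityTheory.cond_apply (hprefmeas t x)]
        have hadjmeas : MeasurableSet {ω' : ℕ → Fin n | G.Adj (x t) (Yev (t + 1) ω')} :=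
          hYevMeas (t + 1) {w | G.Adj (x t) w}
        rw [hmape _ ((hprefmeas t x).inter hadjmeas)]
        have hpre2 : Φ ⁻¹' (GRW.prefixEvent Yev t x ∩
              {ω' | G.Adj (x t) (Yev (t + 1) ω')}) =
            {ω | ∀ i ≤ t, GRWAux.Yp G X i ω = x i} ∩
              {ω | G.Adj (x t) (GRWAux.Yp G X (t + 1) ω)} := by
          rw [Set.preimage_inter, hpull]
          congr 1
          ext ω
          simp only [Set.mem_preimage, Set.mem_setOf_eq, hYΦ]
        have hPmeas : MeasurableSet {ω | ∀ i ≤ t, GRWAux.Yp G X i ω = x i} := by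
          have heq2 : {ω | ∀ i ≤ t, GRWAux.Yp G X i ω = x i} =
              ⋂ i ∈ Set.Iic t, {ω | GRWAux.Yp G X i ω ∈ ({x i} : Set V)} := by
            ext ω
            simp
          rw [heq2]
          exact MeasurableSet.biInter (Set.to_countable _)
            fun i _ => GRWAux.measurable_Yp G X hX1 i _
        have hdec : {ω | ∀ i ≤ t, GRWAux.Yp G X i ω = x i} ∩
            {ω | G.Adj (x t) (GRWAux.Yp G X (t + 1) ω)} =
            ⋃ w ∈ G.neighborFinset (x t),
              ({ω | ∀ i ≤ t, GRWAux.Yp G X i ω = x i} ∩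
                {ω | GRWAux.Yp G X (t + 1) ω = w}) := by
          ext ω
          simp only [Set.mem_inter_iff, Set.mem_setOf_eq, Set.mem_iUnion,
            SimpleGraph.mem_neighborFinset, exists_prop]
          constructor
          · rintro ⟨h1, h2⟩
            exact ⟨GRWAux.Yp G X (t + 1) ω, h2, h1, rfl⟩
          · rintro ⟨w, hw, h1, h2⟩
            exact ⟨h1, by rw [h2]; exact hw⟩
        have hsum : μ ({ω | ∀ i ≤ t, GRWAux.Yp G X i ω = x i} ∩
            {ω | G.Adj (x t) (GRWAux.Yp G X (t + 1) ω)}) =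
            μ {ω | ∀ i ≤ t, GRWAux.Yp G X i ω = x i} := by
          rw [hdec, measure_biUnion_finset ?hd ?hm]
          case hd =>
            intro w hw w' hw' hne
            refine Set.disjoint_left.2 ?_
            rintro ω ⟨-, h2⟩ ⟨-, h2'⟩
            exact hne (h2.symm.trans h2')
          case hm =>
            intro w hw
            exact hPmeas.inter (GRWAux.measurable_Yp G X hX1 (t + 1) {w} :
              MeasurableSet {ω | GRWAux.Yp G X (t + 1) ω = w})
          rw [Finset.sum_congr rfl (fun w hw => hkey w
            (by rwa [SimpleGraph.mem_neighborFinset] at hw))]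
          rw [Finset.sum_const, SimpleGraph.card_neighborFinset_eq_degree,
            nsmul_eq_mul, ← mul_assoc,
            ENNReal.mul_inv_cancel hdegne (ENNReal.natCast_ne_top _), one_mul]
        rw [hpre2, hsum, hPev, ENNReal.inv_mul_cancel hP0 hPfin]
    have hbound := hcover (ℕ → Fin n) μ' Yev hsrw
    have hvctmeas := GRWAux.measurable_vct Yev hYevMeas
    have hchange : ∫⁻ ω, ((GRW.vertexCoverTime (GRWAux.Yp G X) ω : ℕ∞) : ℝ≥0∞) ∂μ =
        ∫⁻ ω', ((GRW.vertexCoverTime Yev ω' : ℕ∞) : ℝ≥0∞) ∂μ' := by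
      rw [hμ', MeasureTheory.lintegral_map hvctmeas hΦ]
      apply lintegral_congr
      intro ω
      have heq3 : GRW.vertexCoverTime Yev (Φ ω) =
          GRW.vertexCoverTime (GRWAux.Yp G X) ω := by
        rw [GRW.vertexCoverTime, GRW.vertexCoverTime]
        congr 2
        ext t
        simp only [Set.mem_setOf_eq, hYΦ]
      rw [heq3]
    have hae : ∀ᵐ ω ∂μ, ((GRW.edgeCoverTime G X ω : ℕ∞) : ℝ≥0∞) ≤
        ((GRW.vertexCoverTime (GRWAux.Yp G X) ω : ℕ∞) : ℝ≥0∞) +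
          (G.edgeFinset.card : ℝ≥0∞) := by
      have hg : ∀ᵐ ω ∂μ, ω ∈ GRWAux.GoodSet G X := by
        rw [MeasureTheory.ae_iff]
        exact hnull
      filter_upwards [hg] with ω hgw
      have h1 := GRWAux.pathwise_bound G X heven hgw
      calc ((GRW.edgeCoverTime G X ω : ℕ∞) : ℝ≥0∞)
          ≤ ((GRW.vertexCoverTime (GRWAux.Yp G X) ω +
              (G.edgeFinset.card : ℕ∞) : ℕ∞) : ℝ≥0∞) := ENat.toENNReal_le.2 h1
        _ = _ := by rw [ENat.toENNReal_add, ENat.toENNReal_coe]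
    calc ∫⁻ ω, ((GRW.edgeCoverTime G X ω : ℕ∞) : ℝ≥0∞) ∂μ
        ≤ ∫⁻ ω, (((GRW.vertexCoverTime (GRWAux.Yp G X) ω : ℕ∞) : ℝ≥0∞) +
            (G.edgeFinset.card : ℝ≥0∞)) ∂μ := lintegral_mono_ae hae
      _ = ∫⁻ ω, ((GRW.vertexCoverTime (GRWAux.Yp G X) ω : ℕ∞) : ℝ≥0∞) ∂μ +
            (G.edgeFinset.card : ℝ≥0∞) := by
          rw [MeasureTheory.lintegral_add_right _ measurable_const,
            MeasureTheory.lintegral_const, measure_univ, mul_one]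
      _ ≤ ENNReal.ofReal C + (G.edgeFinset.card : ℝ≥0∞) := by
          rw [hchange]
          exact add_le_add_left hbound _
      _ = (G.edgeFinset.card : ℝ≥0∞) + ENNReal.ofReal C := add_comm _ _
end
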